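/- arXiv:1905.11065 — 4 statements merged into one kernel-verified Lean document; each statement's English description precedes it below -/
import Mathlib

section
/- Let x_{t+Δt} = x_t + φ(ΔW_t ψ(x_t) + Δb_t) with φ three times continuously differentiable, φ(0) = 0, ΔW_t = μ^W Δt + ε^W √Δt, Δb_t = μ^b Δt + ε^b √Δt, with ε^W, ε^b centered Gaussians as in Assumption 4. Then the instantaneous mean satisfies lim_{Δt↓0} E[x_{t+Δt} − x_t | x_t = x]/Δt = φ'(0)(μ^b + μ^W ψ(x)) + (1/2)φ''(0) diag(V(x)), where V(x) = Cov(ε^W ψ(x) + ε^b), pointwise in x, for any fixed x where ψ is locally bounded. -/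
open MeasureTheory ProbabilityTheory Filter

open scoped NNReal ENNReal

lemma aux_integrable_exp_abs (v : ℝ≥0) (c : ℝ) :
    Integrable (fun y : ℝ => Real.exp (c * |y|)) (gaussianReal 0 v) := by
  have hcont : Continuous fun y : ℝ => Real.exp (c * |y|) :=
    Real.continuous_exp.comp (continuous_const.mul continuous_abs)
  rcases eq_or_ne v 0 with hv | hv
  · rw [hv, gaussianReal_zero_var]
    exact (integrable_const _).congr (MeasureTheory.ae_eq_dirac _).symm
  · rw [gaussianReal_of_var_ne_zero _ hv,
      integrable_withDensity_iff (measurable_gaussianPDF _ _)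
        (ae_of_all _ fun y => ENNReal.ofReal_lt_top)]
    have hvpos : (0:ℝ) < (v:ℝ) := by positivity
    have h4v : (0:ℝ) < 1/(4*(v:ℝ)) := by positivity
    refine Integrable.mono' (g := fun y : ℝ =>
        ((Real.sqrt (2 * Real.pi * v))⁻¹ * Real.exp (c^2*v)) * Real.exp (-(1/(4*(v:ℝ))) * y^2))
      ((integrable_exp_neg_mul_sq h4v).const_mul _) ?_ (ae_of_all _ fun y => ?_)
    · exact (hcont.measurable.mul
        (measurable_gaussianPDF 0 v).ennreal_toReal).aestronglyMeasurable
    · have hpdf : (gaussianPDF 0 v y).toReal = gaussianPDFReal 0 v y := by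
        rw [gaussianPDF_def, ENNReal.toReal_ofReal (gaussianPDFReal_nonneg _ _ _)]
      rw [Real.norm_eq_abs, abs_of_nonneg (by positivity : (0:ℝ) ≤ _), hpdf,
        gaussianPDFReal_def]
      have key : c * |y| + (-(y - 0)^2/(2*(v:ℝ))) ≤ c^2*v + (-(1/(4*(v:ℝ))) * y^2) := by
        have h1 : c * |y| ≤ |c| * |y| := by
          have := le_abs_self c; nlinarith [abs_nonneg y]
        have h2 : 4*(v:ℝ)*(|c| * |y|) ≤ y^2 + 4*c^2*(v:ℝ)^2 := by
          nlinarith [sq_nonneg (abs y - 2*(abs c)*(v:ℝ)), sq_abs y, sq_abs c]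
        rw [← sub_nonneg]
        have expand : (c^2*(v:ℝ) + (-(1/(4*(v:ℝ))) * y^2)) - (c * |y| + (-(y - 0)^2/(2*(v:ℝ))))
            = (y^2 + 4*c^2*(v:ℝ)^2 - 4*(v:ℝ)*(c * |y|)) / (4*(v:ℝ)) := by
          field_simp; ring
        rw [expand]
        apply div_nonneg _ (by positivity)
        nlinarith
      show Real.exp (c * |y|) * ((Real.sqrt (2 * Real.pi * v))⁻¹ * Real.exp (-(y - 0)^2/(2*(v:ℝ))))
          ≤ ((Real.sqrt (2 * Real.pi * v))⁻¹ * Real.exp (c^2*v)) * Real.exp (-(1/(4*(v:ℝ))) * y^2)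
      calc Real.exp (c * |y|) * ((Real.sqrt (2 * Real.pi * v))⁻¹ * Real.exp (-(y - 0)^2/(2*(v:ℝ))))
          = (Real.sqrt (2 * Real.pi * v))⁻¹ * Real.exp (c * |y| + (-(y - 0)^2/(2*(v:ℝ)))) := by
            rw [Real.exp_add]; ring
        _ ≤ (Real.sqrt (2 * Real.pi * v))⁻¹ * Real.exp (c^2*v + (-(1/(4*(v:ℝ))) * y^2)) := by
            gcongr
        _ = ((Real.sqrt (2 * Real.pi * v))⁻¹ * Real.exp (c^2*v)) * Real.exp (-(1/(4*(v:ℝ))) * y^2) := by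
            rw [Real.exp_add]; ring

lemma aux_taylor_bound (φ : ℝ → ℝ) (hφ : ContDiff ℝ 3 φ) (hφ0 : φ 0 = 0)
    (k C : ℝ) (hk : 0 < k) (hC : 0 ≤ C)
    (hgrowth : ∀ y : ℝ, |iteratedDeriv 2 φ y| + |iteratedDeriv 3 φ y| ≤ C * Real.exp (k * |y|)) :
    ∀ y : ℝ, |φ y - deriv φ 0 * y - iteratedDeriv 2 φ 0 / 2 * y^2|
      ≤ (C * Real.exp (k * |y|)) * |y|^3 := by
  have hd0 : Differentiable ℝ φ := hφ.differentiable (by norm_num)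
  have hd1 : Differentiable ℝ (deriv φ) := by
    have := hφ.differentiable_iteratedDeriv 1 (by norm_num)
    simpa [iteratedDeriv_one] using this
  have hd2 : Differentiable ℝ (iteratedDeriv 2 φ) :=
    hφ.differentiable_iteratedDeriv 2 (by norm_num)
  have hder2 : deriv (deriv φ) = iteratedDeriv 2 φ := by
    rw [iteratedDeriv_succ, iteratedDeriv_one]
  have hder3 : deriv (iteratedDeriv 2 φ) = iteratedDeriv 3 φ := by
    exact (iteratedDeriv_succ (n := 2)).symm
  intro y
  set M : ℝ := C * Real.exp (k * |y|) with hM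
  have hMnn : 0 ≤ M := by positivity
  have hconv : Convex ℝ (Set.uIcc 0 y) := convex_uIcc 0 y
  have h0s : (0:ℝ) ∈ Set.uIcc 0 y := Set.left_mem_uIcc
  have hys : y ∈ Set.uIcc 0 y := Set.right_mem_uIcc
  have habs : ∀ t ∈ Set.uIcc 0 y, |t| ≤ |y| := by
    intro t ht
    rcases Set.mem_uIcc.mp ht with ⟨h1, h2⟩ | ⟨h1, h2⟩
    · rw [abs_of_nonneg h1]; exact h2.trans (le_abs_self y)
    · rw [abs_of_nonpos h2]; exact (neg_le_neg h1).trans (neg_le_abs y)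
  -- bound on third derivative on the interval
  have h3bd : ∀ t ∈ Set.uIcc 0 y, ‖iteratedDeriv 3 φ t‖ ≤ M := by
    intro t ht
    rw [Real.norm_eq_abs]
    refine le_trans (le_add_of_nonneg_left (abs_nonneg _)) ((hgrowth t).trans ?_)
    exact mul_le_mul_of_nonneg_left
      (Real.exp_le_exp.mpr (mul_le_mul_of_nonneg_left (habs t ht) hk.le)) hC
  -- the three auxiliary functions
  set g0 : ℝ → ℝ := fun t => φ t - deriv φ 0 * t - iteratedDeriv 2 φ 0 / 2 * t^2 with hg0
  set g1 : ℝ → ℝ := fun t => deriv φ t - deriv φ 0 - iteratedDeriv 2 φ 0 * t with hg1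
  set g2 : ℝ → ℝ := fun t => iteratedDeriv 2 φ t - iteratedDeriv 2 φ 0 with hg2
  have hg2d : ∀ t, HasDerivAt g2 (iteratedDeriv 3 φ t) t := by
    intro t
    simpa [hg2] using ((hd2 t).hasDerivAt.congr_deriv (by rw [hder3])).sub_const (iteratedDeriv 2 φ 0)
  have hg1d : ∀ t, HasDerivAt g1 (g2 t) t := by
    intro t
    have h1 : HasDerivAt (deriv φ) (iteratedDeriv 2 φ t) t :=
      (hd1 t).hasDerivAt.congr_deriv (by rw [hder2])
    simpa [hg1, hg2, Pi.sub_def] using (h1.sub_const _).sub ((hasDerivAt_id t).const_mul _)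
  have hg0d : ∀ t, HasDerivAt g0 (g1 t) t := by
    intro t
    have h1 : HasDerivAt φ (deriv φ t) t := (hd0 t).hasDerivAt
    have h2 : HasDerivAt (fun t : ℝ => deriv φ 0 * t) (deriv φ 0) t := by
      simpa using (hasDerivAt_id t).const_mul (deriv φ 0)
    have h3 : HasDerivAt (fun t : ℝ => iteratedDeriv 2 φ 0 / 2 * t^2)
        (iteratedDeriv 2 φ 0 * t) t := by
      have := (hasDerivAt_pow 2 t).const_mul (iteratedDeriv 2 φ 0 / 2)
      simpa using this.congr_deriv (by ring)
    simpa [hg0, hg1, Pi.sub_def] using (h1.sub h2).sub h3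
  -- chain of MVT bounds
  have b2 : ∀ t ∈ Set.uIcc 0 y, ‖g2 t‖ ≤ M * |y| := by
    intro t ht
    have h := hconv.norm_image_sub_le_of_norm_hasDerivWithin_le
      (fun u _ => (hg2d u).hasDerivWithinAt) h3bd h0s ht
    have hz : g2 0 = 0 := by simp [hg2]
    rw [hz, sub_zero, sub_zero, Real.norm_eq_abs] at h
    exact h.trans (mul_le_mul_of_nonneg_left (habs t ht) hMnn)
  have b1 : ∀ t ∈ Set.uIcc 0 y, ‖g1 t‖ ≤ M * |y| * |y| := by
    intro t ht
    have h := hconv.norm_image_sub_le_of_norm_hasDerivWithin_le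
      (fun u _ => (hg1d u).hasDerivWithinAt) b2 h0s ht
    have hz : g1 0 = 0 := by simp [hg1]
    rw [hz, sub_zero, sub_zero, Real.norm_eq_abs] at h
    exact h.trans (mul_le_mul_of_nonneg_left (habs t ht) (by positivity))
  have b0 := hconv.norm_image_sub_le_of_norm_hasDerivWithin_le
      (fun u _ => (hg0d u).hasDerivWithinAt) b1 h0s hys
  have hz : g0 0 = 0 := by simp [hg0, hφ0]
  rw [hz, sub_zero, sub_zero] at b0
  simp only [Real.norm_eq_abs] at b0
  have : |g0 y| ≤ M * |y|^3 := by
    refine b0.trans (le_of_eq ?_); ring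
  simpa [hg0] using this

lemma aux_mean_zero {Ω : Type*} [MeasureSpace Ω] [IsProbabilityMeasure (ℙ : Measure Ω)]
    (X : Ω → ℝ) (v : ℝ≥0) (hX : Measurable X)
    (h1 : Measure.map X ℙ = gaussianReal 0 v)
    (h2 : Measure.map (fun ω => -X ω) ℙ = gaussianReal 0 v) :
    ∫ ω, X ω = 0 := by
  have e1 : ∫ ω, X ω ∂ℙ = ∫ y, y ∂(Measure.map X ℙ) :=
    (integral_map hX.aemeasurable aestronglyMeasurable_id).symm
  have e2 : ∫ y, y ∂(Measure.map (fun ω => -X ω) ℙ) = ∫ ω, -X ω ∂ℙ :=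
    integral_map hX.neg.aemeasurable aestronglyMeasurable_id
  rw [h1, ← h2, e2, integral_neg] at e1
  linarith

/-- For the residual recursion
`x_{t+Δt} = x_t + φ(ΔW_t ψ(x_t) + Δb_t)` with `ΔW_t = μ^W Δt + ε^W √Δt`,
`Δb_t = μ^b Δt + ε^b √Δt` and centered Gaussian `ε^W, ε^b`, the instantaneous
mean satisfies, coordinatewise and pointwise in the fixed state `x`:
`lim_{Δt↓0} E[Δx | x]/Δt = φ'(0)(μ^b + μ^W ψ(x)) + (1/2)φ''(0) diag(V(x))`
where `V(x) = Cov(ε^W ψ(x) + ε^b)`. -/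
theorem stmt_10 {Ω : Type*} [MeasureSpace Ω] [IsProbabilityMeasure (ℙ : Measure Ω)]
    {D : ℕ} (ψ : (Fin D → ℝ) → (Fin D → ℝ)) (x : Fin D → ℝ)
    (φ : ℝ → ℝ) (hφ : ContDiff ℝ 3 φ) (hφ0 : φ 0 = 0)
    (k C : ℝ) (hk : 0 < k) (hC : 0 ≤ C)
    (hgrowth : ∀ y : ℝ,
      |iteratedDeriv 2 φ y| + |iteratedDeriv 3 φ y| ≤ C * Real.exp (k * |y|))
    (μW : Matrix (Fin D) (Fin D) ℝ) (μb : Fin D → ℝ)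
    (SW : Matrix (Fin D × Fin D) (Fin D × Fin D) ℝ) (Sb : Matrix (Fin D) (Fin D) ℝ)
    (hSW : SW.PosSemidef) (hSb : Sb.PosSemidef)
    (εW : Ω → Fin D → Fin D → ℝ) (εb : Ω → Fin D → ℝ)
    (hWmeas : Measurable εW) (hbmeas : Measurable εb)
    -- ε^W is a centered Gaussian matrix with covariance SW between its entries:
    (hWgauss : ∀ c : Fin D × Fin D → ℝ,
      Measure.map (fun ω => ∑ p : Fin D × Fin D, c p * εW ω p.1 p.2) ℙ
        = gaussianReal 0 ((∑ p : Fin D × Fin D, ∑ q : Fin D × Fin D,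
            c p * SW p q * c q).toNNReal))
    -- ε^b is a centered Gaussian vector with covariance Sb:
    (hbgauss : ∀ c : Fin D → ℝ,
      Measure.map (fun ω => ∑ d, c d * εb ω d) ℙ
        = gaussianReal 0 ((∑ d, ∑ d', c d * Sb d d' * c d').toNNReal))
    (hindep : IndepFun εW εb ℙ)
    -- the increment of the residual recursion, conditionally on the state x:
    (Δx : ℝ → Ω → Fin D → ℝ)
    (hΔx : ∀ Δt ω d, Δx Δt ω d
      = φ (∑ i, (μW d i * Δt + εW ω d i * Real.sqrt Δt) * ψ x i
            + (μb d * Δt + εb ω d * Real.sqrt Δt)))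
    -- the covariance matrix V(x) of ε^W ψ(x) + ε^b:
    (V : Matrix (Fin D) (Fin D) ℝ)
    (hV : ∀ d d', V d d' = ∫ ω, (∑ i, εW ω d i * ψ x i + εb ω d)
                              * (∑ i, εW ω d' i * ψ x i + εb ω d')) :
    ∀ d : Fin D,
      Tendsto (fun Δt : ℝ => (∫ ω, Δx Δt ω d) / Δt) (nhdsWithin 0 (Set.Ioi 0))
        (nhds (deriv φ 0 * (μb d + ∑ i, μW d i * ψ x i)
          + 1 / 2 * iteratedDeriv 2 φ 0 * V d d)) := by
  intro d
  set a : ℝ := μb d + ∑ i, μW d i * ψ x i with ha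
  set W : Ω → ℝ := fun ω => ∑ i, εW ω d i * ψ x i with hWdef
  set B : Ω → ℝ := fun ω => εb ω d with hBdef
  -- measurability
  have hWm : Measurable W := by
    refine Finset.measurable_sum _ fun i _ => Measurable.mul_const ?_ _
    exact (measurable_pi_apply i).comp ((measurable_pi_apply d).comp hWmeas)
  have hBm : Measurable B := (measurable_pi_apply d).comp hbmeas
  -- laws of W and -W
  obtain ⟨vW, hWlaw, hWlaw'⟩ : ∃ v : ℝ≥0, Measure.map W ℙ = gaussianReal 0 v ∧
      Measure.map (fun ω => -W ω) ℙ = gaussianReal 0 v := by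
    set c : Fin D × Fin D → ℝ := fun p => if p.1 = d then ψ x p.2 else 0 with hc
    have hfun : ∀ ω, (∑ p : Fin D × Fin D, c p * εW ω p.1 p.2) = W ω := by
      intro ω
      rw [Fintype.sum_prod_type, hWdef]
      simp [hc, ite_mul, Finset.sum_ite_eq', mul_comm]
    refine ⟨(∑ p : Fin D × Fin D, ∑ q : Fin D × Fin D, c p * SW p q * c q).toNNReal, ?_, ?_⟩
    · rw [← hWgauss c]
      congr 1
      funext ω
      exact (hfun ω).symm
    · have h := hWgauss (fun p => -c p)
      have hfun' : (fun ω => ∑ p : Fin D × Fin D, (-c p) * εW ω p.1 p.2)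
          = fun ω => -W ω := by
        funext ω
        rw [← hfun ω, ← Finset.sum_neg_distrib]
        simp [neg_mul]
      have hvar : (∑ p : Fin D × Fin D, ∑ q : Fin D × Fin D, (-c p) * SW p q * (-c q))
          = ∑ p : Fin D × Fin D, ∑ q : Fin D × Fin D, c p * SW p q * c q :=
        Finset.sum_congr rfl fun p _ => Finset.sum_congr rfl fun q _ => by ring
      rw [hfun', hvar] at h
      exact h
  -- laws of B and -B
  obtain ⟨vB, hBlaw, hBlaw'⟩ : ∃ v : ℝ≥0, Measure.map B ℙ = gaussianReal 0 v ∧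
      Measure.map (fun ω => -B ω) ℙ = gaussianReal 0 v := by
    set c : Fin D → ℝ := fun j => if j = d then 1 else 0 with hc
    have hfun : ∀ ω, (∑ j, c j * εb ω j) = B ω := by
      intro ω
      rw [hBdef]
      simp [hc, ite_mul, Finset.sum_ite_eq']
    refine ⟨(∑ j, ∑ j', c j * Sb j j' * c j').toNNReal, ?_, ?_⟩
    · rw [← hbgauss c]
      congr 1
      funext ω
      exact (hfun ω).symm
    · have h := hbgauss (fun j => -c j)
      have hfun' : (fun ω => ∑ j, (-c j) * εb ω j) = fun ω => -B ω := by
        funext ω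
        rw [← hfun ω, ← Finset.sum_neg_distrib]
        simp [neg_mul]
      have hvar : (∑ j, ∑ j', (-c j) * Sb j j' * (-c j'))
          = ∑ j, ∑ j', c j * Sb j j' * c j' :=
        Finset.sum_congr rfl fun p _ => Finset.sum_congr rfl fun q _ => by ring
      rw [hfun', hvar] at h
      exact h
  -- mean zero
  have hEW : ∫ ω, W ω = 0 := aux_mean_zero W vW hWm hWlaw hWlaw'
  have hEB : ∫ ω, B ω = 0 := aux_mean_zero B vB hBm hBlaw hBlaw'
  -- exponential integrability
  have hexpcont : ∀ c : ℝ, Continuous fun y : ℝ => Real.exp (c * |y|) := fun c =>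
    Real.continuous_exp.comp (continuous_const.mul continuous_abs)
  have intW : ∀ c : ℝ, Integrable (fun ω => Real.exp (c * |W ω|)) ℙ := by
    intro c
    have h := aux_integrable_exp_abs vW c
    rw [← hWlaw] at h
    exact (integrable_map_measure (hexpcont c).aestronglyMeasurable hWm.aemeasurable).mp h
  have intB : ∀ c : ℝ, Integrable (fun ω => Real.exp (c * |B ω|)) ℙ := by
    intro c
    have h := aux_integrable_exp_abs vB c
    rw [← hBlaw] at h
    exact (integrable_map_measure (hexpcont c).aestronglyMeasurable hBm.aemeasurable).mp h
  -- independence of images and products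
  have key : ∀ c : ℝ, Integrable (fun ω => Real.exp (c * |W ω|) * Real.exp (c * |B ω|)) ℙ := by
    intro c
    have hf : Measurable fun m : Fin D → Fin D → ℝ =>
        Real.exp (c * |∑ i, m d i * ψ x i|) := by
      have h1 : Measurable fun m : Fin D → Fin D → ℝ => m d := measurable_pi_apply d
      have h2 : Measurable fun m : Fin D → Fin D → ℝ => ∑ i, m d i * ψ x i := by
        refine Finset.measurable_sum _ fun i _ => ?_
        have h3 : Measurable fun g : Fin D → ℝ => g i := measurable_pi_apply i
        exact (h3.comp h1).mul_const _
      exact Real.measurable_exp.comp ((h2.abs).const_mul c)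
    have hg : Measurable fun m : Fin D → ℝ => Real.exp (c * |m d|) := by
      have h4 : Measurable fun m : Fin D → ℝ => m d := measurable_pi_apply d
      exact Real.measurable_exp.comp ((h4.abs).const_mul c)
    have hcomp : IndepFun (fun ω => Real.exp (c * |W ω|))
        (fun ω => Real.exp (c * |B ω|)) ℙ := hindep.comp hf hg
    exact hcomp.integrable_mul (intW c) (intB c)
  have dom : ∀ (f : Ω → ℝ) (c K : ℝ), AEStronglyMeasurable f ℙ →
      (∀ ω, ‖f ω‖ ≤ K * (Real.exp (c * |W ω|) * Real.exp (c * |B ω|))) →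
      Integrable f ℙ :=
    fun f c K hf hb => Integrable.mono' ((key c).const_mul K) hf (ae_of_all _ hb)
  have hx_le_exp : ∀ t : ℝ, t ≤ Real.exp t := fun t => by
    have := Real.add_one_le_exp t; linarith
  -- basic integrability
  have iW : Integrable W ℙ := by
    refine dom W 1 1 hWm.aestronglyMeasurable fun ω => ?_
    rw [Real.norm_eq_abs, one_mul, one_mul, one_mul]
    calc |W ω| ≤ Real.exp |W ω| := hx_le_exp _
      _ ≤ Real.exp |W ω| * Real.exp |B ω| :=
          le_mul_of_one_le_right (Real.exp_pos _).le (Real.one_le_exp (abs_nonneg _))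
  have iB : Integrable B ℙ := by
    refine dom B 1 1 hBm.aestronglyMeasurable fun ω => ?_
    rw [Real.norm_eq_abs, one_mul, one_mul, one_mul]
    calc |B ω| ≤ Real.exp |B ω| := hx_le_exp _
      _ ≤ Real.exp |W ω| * Real.exp |B ω| :=
          le_mul_of_one_le_left (Real.exp_pos _).le (Real.one_le_exp (abs_nonneg _))
  have hGabs : ∀ ω, |W ω + B ω| ≤ Real.exp (|W ω| + |B ω|) := fun ω =>
    (abs_add_le _ _).trans (hx_le_exp _)
  have iGG : Integrable (fun ω => (W ω + B ω) * (W ω + B ω)) ℙ := by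
    refine dom _ 2 1 ((hWm.add hBm).mul (hWm.add hBm)).aestronglyMeasurable fun ω => ?_
    rw [Real.norm_eq_abs, abs_mul, one_mul]
    calc |W ω + B ω| * |W ω + B ω|
        ≤ Real.exp (|W ω| + |B ω|) * Real.exp (|W ω| + |B ω|) :=
          mul_le_mul (hGabs ω) (hGabs ω) (abs_nonneg _) (Real.exp_pos _).le
      _ = Real.exp (2 * |W ω|) * Real.exp (2 * |B ω|) := by
          rw [← Real.exp_add, ← Real.exp_add]; congr 1; ring
  -- dominating function P
  set Q : Ω → ℝ := fun ω => |a| + (|W ω| + |B ω|) with hQdef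
  set P : Ω → ℝ := fun ω => Q ω ^ 3 * Real.exp (k * Q ω) with hPdef
  have hQnn : ∀ ω, 0 ≤ Q ω := fun ω => by
    rw [hQdef]; positivity
  have hPnn : ∀ ω, 0 ≤ P ω := fun ω => by
    rw [hPdef]; positivity
  have hPm : Measurable P := by
    rw [hPdef, hQdef]
    exact ((measurable_const.add (hWm.abs.add hBm.abs)).pow_const 3).mul
      (Real.measurable_exp.comp ((measurable_const.add (hWm.abs.add hBm.abs)).const_mul k))
  have iP : Integrable P ℙ := by
    refine dom P (k + 3) (Real.exp ((k + 3) * |a|)) hPm.aestronglyMeasurable fun ω => ?_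
    rw [Real.norm_eq_abs, abs_of_nonneg (hPnn ω), hPdef]
    calc Q ω ^ 3 * Real.exp (k * Q ω)
        ≤ Real.exp (Q ω) ^ 3 * Real.exp (k * Q ω) :=
          mul_le_mul_of_nonneg_right
            (pow_le_pow_left₀ (hQnn ω) (hx_le_exp _) 3) (Real.exp_pos _).le
      _ = Real.exp ((k + 3) * |a|) *
          (Real.exp ((k + 3) * |W ω|) * Real.exp ((k + 3) * |B ω|)) := by
          rw [← Real.exp_nat_mul, ← Real.exp_add, ← Real.exp_add, ← Real.exp_add, hQdef]
          congr 1
          push_cast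
          ring
  -- the diagonal covariance
  have hVdd : V d d = ∫ ω, (W ω + B ω) * (W ω + B ω) := by
    simpa [hWdef, hBdef] using hV d d
  -- rewriting the increment argument
  have harg : ∀ (Δt : ℝ) (ω : Ω),
      (∑ i, (μW d i * Δt + εW ω d i * Real.sqrt Δt) * ψ x i
        + (μb d * Δt + εb ω d * Real.sqrt Δt))
      = a * Δt + (W ω + B ω) * Real.sqrt Δt := by
    intro Δt ω
    have h1 : ∀ i ∈ Finset.univ, (μW d i * Δt + εW ω d i * Real.sqrt Δt) * ψ x i
        = μW d i * ψ x i * Δt + εW ω d i * ψ x i * Real.sqrt Δt := fun i _ => by ring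
    rw [Finset.sum_congr rfl h1, Finset.sum_add_distrib, ← Finset.sum_mul, ← Finset.sum_mul,
      ha, hWdef, hBdef]
    ring
  -- Taylor remainder
  set Rem : ℝ → ℝ := fun z => φ z - deriv φ 0 * z - iteratedDeriv 2 φ 0 / 2 * z ^ 2
    with hRemdef
  have hRemBound : ∀ y : ℝ, |Rem y| ≤ (C * Real.exp (k * |y|)) * |y| ^ 3 := by
    intro y
    have := aux_taylor_bound φ hφ hφ0 k C hk hC hgrowth y
    simpa [hRemdef] using this
  have hRemCont : Continuous Rem := by
    rw [hRemdef]
    exact (hφ.continuous.sub (continuous_const.mul continuous_id)).sub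
      (continuous_const.mul (continuous_pow 2))
  have hφsplit : ∀ z : ℝ, φ z
      = deriv φ 0 * z + iteratedDeriv 2 φ 0 / 2 * z ^ 2 + Rem z := fun z => by
    rw [hRemdef]; ring
  -- pointwise remainder bound
  have hRb : ∀ Δt ∈ Set.Ioc (0:ℝ) 1, ∀ ω : Ω,
      ‖Rem (a * Δt + (W ω + B ω) * Real.sqrt Δt)‖
        ≤ (C * (Δt * Real.sqrt Δt)) * P ω := by
    rintro Δt ⟨h0, h1⟩ ω
    set s : ℝ := Real.sqrt Δt with hs
    have hs0 : 0 ≤ s := Real.sqrt_nonneg _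
    have hs2 : s ^ 2 = Δt := Real.sq_sqrt h0.le
    have hs1 : s ≤ 1 := by
      rw [hs]
      calc Real.sqrt Δt ≤ Real.sqrt 1 := Real.sqrt_le_sqrt h1
        _ = 1 := Real.sqrt_one
    have hΔs : Δt ≤ s := by nlinarith
    have hyb : |a * Δt + (W ω + B ω) * s| ≤ s * Q ω := by
      calc |a * Δt + (W ω + B ω) * s| ≤ |a| * Δt + |W ω + B ω| * s := by
            refine (abs_add_le _ _).trans ?_
            rw [abs_mul, abs_mul, abs_of_nonneg h0.le, abs_of_nonneg hs0]
        _ ≤ |a| * s + (|W ω| + |B ω|) * s :=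
            add_le_add (mul_le_mul_of_nonneg_left hΔs (abs_nonneg a))
              (mul_le_mul_of_nonneg_right (abs_add_le _ _) hs0)
        _ = s * Q ω := by rw [hQdef]; ring
    have hQs : s * Q ω ≤ Q ω := by
      nlinarith [hQnn ω]
    rw [Real.norm_eq_abs]
    calc |Rem (a * Δt + (W ω + B ω) * s)|
        ≤ (C * Real.exp (k * |a * Δt + (W ω + B ω) * s|))
            * |a * Δt + (W ω + B ω) * s| ^ 3 := hRemBound _
      _ ≤ (C * Real.exp (k * Q ω)) * (s * Q ω) ^ 3 :=
          mul_le_mul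
            (mul_le_mul_of_nonneg_left
              (Real.exp_le_exp.mpr (mul_le_mul_of_nonneg_left (hyb.trans hQs) hk.le)) hC)
            (pow_le_pow_left₀ (abs_nonneg _) hyb 3) (by positivity) (by positivity)
      _ = (C * (Δt * s)) * P ω := by
          rw [hPdef, ← hs2]; ring
  -- integrability of the remainder
  have iR : ∀ Δt ∈ Set.Ioc (0:ℝ) 1,
      Integrable (fun ω => Rem (a * Δt + (W ω + B ω) * Real.sqrt Δt)) ℙ := by
    intro Δt hΔt
    refine Integrable.mono' (iP.const_mul (C * (Δt * Real.sqrt Δt)))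
      ((hRemCont.measurable.comp
        (measurable_const.add ((hWm.add hBm).mul_const _))).aestronglyMeasurable)
      (ae_of_all _ fun ω => hRb Δt hΔt ω)
  -- the main identity for the expectation
  have main_eq : ∀ Δt ∈ Set.Ioc (0:ℝ) 1, (∫ ω, Δx Δt ω d) / Δt
      = deriv φ 0 * a + iteratedDeriv 2 φ 0 / 2 * (a ^ 2 * Δt + V d d)
        + (∫ ω, Rem (a * Δt + (W ω + B ω) * Real.sqrt Δt)) / Δt := by
    rintro Δt hΔt
    obtain ⟨h0, h1⟩ := hΔt
    set s : ℝ := Real.sqrt Δt with hs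
    have hs2 : s ^ 2 = Δt := Real.sq_sqrt h0.le
    have hne : Δt ≠ 0 := h0.ne'
    have iG' : Integrable (fun ω => W ω + B ω) ℙ := by exact iW.add iB
    have iGs : Integrable (fun ω => (W ω + B ω) * s) ℙ := by exact iG'.mul_const s
    have iYlin : Integrable (fun ω => a * Δt + (W ω + B ω) * s) ℙ := by
      exact (integrable_const _).add iGs
    have iY : Integrable (fun ω => deriv φ 0 * (a * Δt + (W ω + B ω) * s)) ℙ := by
      exact iYlin.const_mul _
    have i2 : Integrable (fun ω => 2 * (a * Δt) * s * (W ω + B ω)) ℙ := by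
      exact iG'.const_mul _
    have i3 : Integrable (fun ω => s ^ 2 * ((W ω + B ω) * (W ω + B ω))) ℙ := by
      exact iGG.const_mul _
    have i23 : Integrable (fun ω => 2 * (a * Δt) * s * (W ω + B ω)
        + s ^ 2 * ((W ω + B ω) * (W ω + B ω))) ℙ := by exact i2.add i3
    have iQuad : Integrable (fun ω => a ^ 2 * Δt ^ 2 + (2 * (a * Δt) * s * (W ω + B ω)
        + s ^ 2 * ((W ω + B ω) * (W ω + B ω)))) ℙ := by
      exact (integrable_const _).add i23
    have iYsq : Integrable (fun ω => (a * Δt + (W ω + B ω) * s) ^ 2) ℙ := by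
      refine iQuad.congr (ae_of_all _ fun ω => ?_)
      ring
    have iY2 : Integrable
        (fun ω => iteratedDeriv 2 φ 0 / 2 * (a * Δt + (W ω + B ω) * s) ^ 2) ℙ := by
      exact iYsq.const_mul _
    have iY12 : Integrable (fun ω => deriv φ 0 * (a * Δt + (W ω + B ω) * s)
        + iteratedDeriv 2 φ 0 / 2 * (a * Δt + (W ω + B ω) * s) ^ 2) ℙ := by
      exact iY.add iY2
    have iRR := iR Δt ⟨h0, h1⟩
    have hEG : ∫ ω, (W ω + B ω) = 0 := by
      rw [integral_add iW iB, hEW, hEB]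
      ring
    have hsplit : ∫ ω, Δx Δt ω d
        = ∫ ω, (deriv φ 0 * (a * Δt + (W ω + B ω) * s)
            + iteratedDeriv 2 φ 0 / 2 * (a * Δt + (W ω + B ω) * s) ^ 2
            + Rem (a * Δt + (W ω + B ω) * s)) := by
      refine integral_congr_ae (ae_of_all _ fun ω => ?_)
      show Δx Δt ω d = _
      rw [hΔx Δt ω d, harg Δt ω]
      exact hφsplit _
    rw [hsplit, integral_add iY12 iRR, integral_add iY iY2]
    have hEGs : ∫ ω, (W ω + B ω) * s = 0 := by
      rw [integral_mul_const, hEG, zero_mul]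
    have e1 : ∫ ω, deriv φ 0 * (a * Δt + (W ω + B ω) * s) = deriv φ 0 * (a * Δt) := by
      rw [integral_const_mul, integral_add (integrable_const _) iGs, hEGs, integral_const]
      simp
    have e2 : ∫ ω, iteratedDeriv 2 φ 0 / 2 * (a * Δt + (W ω + B ω) * s) ^ 2
        = iteratedDeriv 2 φ 0 / 2 * (a ^ 2 * Δt ^ 2 + Δt * V d d) := by
      rw [integral_const_mul]
      congr 1
      have expand : ∫ ω, (a * Δt + (W ω + B ω) * s) ^ 2
          = ∫ ω, (a ^ 2 * Δt ^ 2 + (2 * (a * Δt) * s * (W ω + B ω)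
              + s ^ 2 * ((W ω + B ω) * (W ω + B ω)))) := by
        refine integral_congr_ae (ae_of_all _ fun ω => ?_)
        ring
      have h2' : ∫ ω, 2 * (a * Δt) * s * (W ω + B ω) = 0 := by
        rw [integral_const_mul, hEG, mul_zero]
      have h3' : ∫ ω, s ^ 2 * ((W ω + B ω) * (W ω + B ω)) = s ^ 2 * V d d := by
        rw [integral_const_mul, ← hVdd]
      rw [expand, integral_add (integrable_const _) i23,
        integral_add i2 i3, h2', h3', integral_const]
      simp only [measure_univ, probReal_univ, ENNReal.toReal_one, smul_eq_mul, one_mul, zero_add]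
      rw [hs2]
    rw [e1, e2]
    field_simp
    ring
  -- limit of the remainder term
  set I : ℝ := ∫ ω, P ω with hI
  have hInn : 0 ≤ I := integral_nonneg hPnn
  have hrem_tend : Tendsto
      (fun Δt : ℝ => (∫ ω, Rem (a * Δt + (W ω + B ω) * Real.sqrt Δt)) / Δt)
      (nhdsWithin 0 (Set.Ioi 0)) (nhds 0) := by
    refine squeeze_zero_norm' (a := fun Δt => (C * I) * Real.sqrt Δt) ?_ ?_
    · refine mem_of_superset (Ioc_mem_nhdsGT_of_mem ⟨le_refl 0, zero_lt_one⟩) ?_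
      rintro Δt hΔt
      obtain ⟨h0, h1⟩ := hΔt
      have hne : Δt ≠ 0 := h0.ne'
      have hbd : ‖∫ ω, Rem (a * Δt + (W ω + B ω) * Real.sqrt Δt)‖
          ≤ (C * (Δt * Real.sqrt Δt)) * I := by
        refine (norm_integral_le_integral_norm _).trans ?_
        rw [hI, ← integral_const_mul]
        exact integral_mono (iR Δt ⟨h0, h1⟩).norm (iP.const_mul _)
          (fun ω => hRb Δt ⟨h0, h1⟩ ω)
      show ‖(∫ ω, Rem (a * Δt + (W ω + B ω) * Real.sqrt Δt)) / Δt‖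
        ≤ C * I * Real.sqrt Δt
      rw [norm_div, Real.norm_eq_abs Δt, abs_of_pos h0]
      calc ‖∫ ω, Rem (a * Δt + (W ω + B ω) * Real.sqrt Δt)‖ / Δt
          ≤ ((C * (Δt * Real.sqrt Δt)) * I) / Δt := by
            gcongr
        _ = (C * I) * Real.sqrt Δt := by field_simp
    · have hcont : Continuous fun t : ℝ => (C * I) * Real.sqrt t :=
        continuous_const.mul Real.continuous_sqrt
      have h2 : Tendsto (fun t : ℝ => (C * I) * Real.sqrt t)
          (nhdsWithin 0 (Set.Ioi 0)) (nhds ((C * I) * Real.sqrt 0)) :=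
        (hcont.tendsto 0).mono_left nhdsWithin_le_nhds
      simpa using h2
  -- assemble the limit
  have hcont2 : Tendsto (fun Δt : ℝ => deriv φ 0 * a
      + iteratedDeriv 2 φ 0 / 2 * (a ^ 2 * Δt + V d d))
      (nhdsWithin 0 (Set.Ioi 0))
      (nhds (deriv φ 0 * a + iteratedDeriv 2 φ 0 / 2 * (a ^ 2 * 0 + V d d))) := by
    have hcont : Continuous fun Δt : ℝ => deriv φ 0 * a
        + iteratedDeriv 2 φ 0 / 2 * (a ^ 2 * Δt + V d d) := by
      exact continuous_const.add (continuous_const.mul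
        ((continuous_const.mul continuous_id').add continuous_const))
    exact (hcont.tendsto 0).mono_left nhdsWithin_le_nhds
  have hsum := hcont2.add hrem_tend
  have hL : deriv φ 0 * a + 1 / 2 * iteratedDeriv 2 φ 0 * V d d
      = deriv φ 0 * a + iteratedDeriv 2 φ 0 / 2 * (a ^ 2 * 0 + V d d) + 0 := by ring
  rw [hL]
  refine hsum.congr' ?_
  refine mem_of_superset (Ioc_mem_nhdsGT_of_mem ⟨le_refl 0, zero_lt_one⟩) ?_
  intro Δt hΔt
  exact (main_eq Δt hΔt).symm
end

section
/- Under the same residual recursion, the instantaneous covariance satisfies lim_{Δt↓0} Cov[x_{t+Δt} − x_t | x_t = x]/Δt = φ'(0)² · V(x), where V(x) = Cov(ε^W ψ(x) + ε^b). -/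
open MeasureTheory ProbabilityTheory Filter
open scoped NNReal ENNReal

section Aux

open Real

lemma gauss_int_exp (v : ℝ≥0) (t : ℝ) :
    Integrable (fun x => Real.exp (t * x)) (gaussianReal 0 v) := by
  by_cases hv : v = 0
  · subst hv
    simp only [gaussianReal_zero_var]
    refine (integrable_const (Real.exp (t * 0))).congr ?_
    rw [MeasureTheory.ae_dirac_eq]
    exact Filter.eventually_pure.2 rfl
  · rw [gaussianReal_of_var_ne_zero _ hv, gaussianPDF_def]
    rw [integrable_withDensity_iff (by exact (measurable_gaussianPDFReal 0 v).ennreal_ofReal)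
      (by simp)]
    have hv0 : (0:ℝ) < (v:ℝ) := by positivity
    have key : (fun x => Real.exp (t * x) * (ENNReal.ofReal (gaussianPDFReal 0 v x)).toReal)
        = fun x => Real.exp ((v:ℝ) * t^2 / 2) * gaussianPDFReal (t * v) v x := by
      ext x
      rw [ENNReal.toReal_ofReal (gaussianPDFReal_nonneg _ _ _)]
      unfold gaussianPDFReal
      rw [mul_left_comm, ← Real.exp_add, mul_left_comm, ← Real.exp_add]
      congr 2
      field_simp
      ring
    rw [key]
    exact (integrable_gaussianPDFReal _ _).const_mul _

lemma gauss_int_exp' (v : ℝ≥0) : Integrable Real.exp (gaussianReal 0 v) := by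
  simpa using gauss_int_exp v 1

lemma gauss_int_id (v : ℝ≥0) : Integrable (fun x : ℝ => x) (gaussianReal 0 v) := by
  refine ((gauss_int_exp v 1).add (gauss_int_exp v (-1))).mono' aestronglyMeasurable_id ?_
  refine Filter.Eventually.of_forall fun y => ?_
  simp only [Pi.add_apply, Real.norm_eq_abs, one_mul, neg_one_mul]
  rcases abs_cases y with ⟨h,_⟩|⟨h,_⟩ <;>
    nlinarith [Real.add_one_le_exp y, Real.add_one_le_exp (-y), Real.exp_pos y, Real.exp_pos (-y)]

lemma gauss_integral_id (v : ℝ≥0) : ∫ x, x ∂(gaussianReal 0 v) = 0 := by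
  have h3 : (fun x : ℝ => -1 * x) = (fun x : ℝ => -x) := by ext x; ring
  have hmap : (gaussianReal 0 v).map (fun x : ℝ => -x) = gaussianReal 0 v := by
    have h := gaussianReal_map_const_mul (μ := 0) (v := v) (-1)
    have h2 : (⟨(-1:ℝ)^2, sq_nonneg _⟩ : ℝ≥0) = 1 := by ext; norm_num
    rw [mul_zero, h3] at h
    rw [h]
    congr 1
    ext; simp
  have h1 := integral_map (μ := gaussianReal 0 v) (φ := fun x : ℝ => -x)
    (f := fun x : ℝ => x) (by fun_prop) aestronglyMeasurable_id
  rw [hmap] at h1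
  rw [integral_neg] at h1
  linarith

lemma taylor_bd {φ : ℝ → ℝ} (hφ : ContDiff ℝ 3 φ) (hφ0 : φ 0 = 0) {k C : ℝ}
    (hk : 0 ≤ k)
    (hg : ∀ y : ℝ, |iteratedDeriv 2 φ y| ≤ C * Real.exp (k * |y|)) (y : ℝ) :
    |φ y - deriv φ 0 * y| ≤ C * y^2 * Real.exp (k * |y|) := by
  have hC : 0 ≤ C := by
    have := hg 0
    have := abs_nonneg (iteratedDeriv 2 φ 0)
    nlinarith [Real.exp_pos (k * |(0:ℝ)|)]
  have hφd : ContDiff ℝ 2 (deriv φ) := by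
    have h := (contDiff_succ_iff_deriv (n := 2)).mp (by exact_mod_cast hφ)
    exact h.2.2
  have hd1 : Differentiable ℝ φ := hφ.differentiable (by norm_num)
  have hd2 : Differentiable ℝ (deriv φ) := hφd.differentiable (by norm_num)
  have hmem : ∀ t ∈ Set.uIcc (0:ℝ) y, |t| ≤ |y| := by
    intro t ht
    rcases Set.mem_uIcc.mp ht with ⟨h1, h2⟩ | ⟨h1, h2⟩ <;>
      rcases abs_cases t with ⟨e,_⟩|⟨e,_⟩ <;> rcases abs_cases y with ⟨e',_⟩|⟨e',_⟩ <;> linarith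
  set M := C * Real.exp (k * |y|) with hM
  have hM0 : 0 ≤ M := by positivity
  have stepA : ∀ t ∈ Set.uIcc (0:ℝ) y, |deriv φ t - deriv φ 0| ≤ M * |y| := by
    intro t ht
    have h0 : (0:ℝ) ∈ Set.uIcc (0:ℝ) y := Set.left_mem_uIcc
    have := Convex.norm_image_sub_le_of_norm_deriv_le (C := M) (f := deriv φ)
      (s := Set.uIcc (0:ℝ) y) (fun u _ => hd2 u) ?_ (convex_uIcc _ _) h0 ht
    · rw [Real.norm_eq_abs, Real.norm_eq_abs, sub_zero] at this
      exact this.trans (by nlinarith [hmem t ht, abs_nonneg t])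
    · intro u hu
      have h2 : deriv (deriv φ) u = iteratedDeriv 2 φ u := by
        rw [iteratedDeriv_succ, iteratedDeriv_one]
      rw [Real.norm_eq_abs, h2]
      refine (hg u).trans ?_
      have : Real.exp (k * |u|) ≤ Real.exp (k * |y|) :=
        Real.exp_le_exp.mpr (mul_le_mul_of_nonneg_left (hmem u hu) hk)
      nlinarith
  have hFha : ∀ u : ℝ, HasDerivAt (fun t => φ t - deriv φ 0 * t) (deriv φ u - deriv φ 0) u := by
    intro u
    have := (hd1 u).hasDerivAt.sub (((hasDerivAt_id u).const_mul (deriv φ 0)))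
    rw [mul_one] at this; exact this
  have hF : ∀ u : ℝ, DifferentiableAt ℝ (fun t => φ t - deriv φ 0 * t) u :=
    fun u => (hFha u).differentiableAt
  have hFd : ∀ u : ℝ, deriv (fun t => φ t - deriv φ 0 * t) u = deriv φ u - deriv φ 0 :=
    fun u => (hFha u).deriv
  have stepB := Convex.norm_image_sub_le_of_norm_deriv_le (C := M * |y|)
    (f := fun t => φ t - deriv φ 0 * t)
    (s := Set.uIcc (0:ℝ) y) (fun u _ => hF u)
    (fun u hu => by rw [Real.norm_eq_abs, hFd u]; exact stepA u hu)
    (convex_uIcc _ _) Set.left_mem_uIcc Set.right_mem_uIcc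
  simp only [hφ0, mul_zero, sub_zero, Real.norm_eq_abs] at stepB
  calc |φ y - deriv φ 0 * y| ≤ M * |y| * |y| := stepB
    _ = C * y^2 * Real.exp (k * |y|) := by rw [hM, mul_assoc, abs_mul_abs_self]; ring

lemma sum_pickb {D : ℕ} (d : Fin D) (f : Fin D → ℝ) (c : ℝ) :
    ∑ e, (if e = d then c else 0) * f e = c * f d := by
  rw [Finset.sum_eq_single d]
  · simp
  · intro e _ he; simp [he]
  · simp

lemma sum_pick {D : ℕ} (d : Fin D) (f : Fin D → Fin D → ℝ) (c : Fin D → ℝ) :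
    ∑ p : Fin D × Fin D, (if p.1 = d then c p.2 else 0) * f p.1 p.2
      = ∑ i, c i * f d i := by
  rw [Fintype.sum_prod_type]
  rw [Finset.sum_eq_single d]
  · simp
  · intro e _ he; simp [he]
  · simp

lemma sq_exp_le {k t : ℝ} (hk : 0 ≤ k) (ht : 0 ≤ t) :
    t^2 * Real.exp (k * t) ≤ Real.exp ((k + 2) * t) := by
  have h1 : t ≤ Real.exp t := by linarith [Real.add_one_le_exp t]
  have h2 : t^2 ≤ Real.exp t * Real.exp t := by nlinarith
  have : t^2 * Real.exp (k * t) ≤ (Real.exp t * Real.exp t) * Real.exp (k * t) :=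
    mul_le_mul_of_nonneg_right h2 (Real.exp_pos _).le
  refine this.trans (le_of_eq ?_)
  rw [← Real.exp_add, ← Real.exp_add]
  ring_nf

end Aux

set_option maxHeartbeats 1000000 in
/-- Under the residual recursion
`x_{t+Δt} = x_t + φ(ΔW_t ψ(x_t) + Δb_t)`, the instantaneous covariance
satisfies `lim_{Δt↓0} Cov[Δx | x]/Δt = φ'(0)² V(x)` where
`V(x) = Cov(ε^W ψ(x) + ε^b)`. -/
theorem stmt_11 {Ω : Type*} [MeasureSpace Ω] [IsProbabilityMeasure (ℙ : Measure Ω)]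
    {D : ℕ} (ψ : (Fin D → ℝ) → (Fin D → ℝ)) (x : Fin D → ℝ)
    (φ : ℝ → ℝ) (hφ : ContDiff ℝ 3 φ) (hφ0 : φ 0 = 0)
    (k C : ℝ) (hk : 0 < k) (hC : 0 ≤ C)
    (hgrowth : ∀ y : ℝ,
      |iteratedDeriv 2 φ y| + |iteratedDeriv 3 φ y| ≤ C * Real.exp (k * |y|))
    (μW : Matrix (Fin D) (Fin D) ℝ) (μb : Fin D → ℝ)
    (SW : Matrix (Fin D × Fin D) (Fin D × Fin D) ℝ) (Sb : Matrix (Fin D) (Fin D) ℝ)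
    (hSW : SW.PosSemidef) (hSb : Sb.PosSemidef)
    (εW : Ω → Fin D → Fin D → ℝ) (εb : Ω → Fin D → ℝ)
    (hWmeas : Measurable εW) (hbmeas : Measurable εb)
    -- ε^W is a centered Gaussian matrix with covariance SW between its entries:
    (hWgauss : ∀ c : Fin D × Fin D → ℝ,
      Measure.map (fun ω => ∑ p : Fin D × Fin D, c p * εW ω p.1 p.2) ℙ
        = gaussianReal 0 ((∑ p : Fin D × Fin D, ∑ q : Fin D × Fin D,
            c p * SW p q * c q).toNNReal))
    -- ε^b is a centered Gaussian vector with covariance Sb: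
    (hbgauss : ∀ c : Fin D → ℝ,
      Measure.map (fun ω => ∑ d, c d * εb ω d) ℙ
        = gaussianReal 0 ((∑ d, ∑ d', c d * Sb d d' * c d').toNNReal))
    (hindep : IndepFun εW εb ℙ)
    -- the increment of the residual recursion, conditionally on the state x:
    (Δx : ℝ → Ω → Fin D → ℝ)
    (hΔx : ∀ Δt ω d, Δx Δt ω d
      = φ (∑ i, (μW d i * Δt + εW ω d i * Real.sqrt Δt) * ψ x i
            + (μb d * Δt + εb ω d * Real.sqrt Δt)))
    -- the covariance matrix V(x) of ε^W ψ(x) + ε^b: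
    (V : Matrix (Fin D) (Fin D) ℝ)
    (hV : ∀ d d', V d d' = ∫ ω, (∑ i, εW ω d i * ψ x i + εb ω d)
                              * (∑ i, εW ω d' i * ψ x i + εb ω d')) :
    ∀ d d' : Fin D,
      Tendsto (fun Δt : ℝ =>
          ((∫ ω, Δx Δt ω d * Δx Δt ω d')
            - (∫ ω, Δx Δt ω d) * (∫ ω, Δx Δt ω d')) / Δt)
        (nhdsWithin 0 (Set.Ioi 0))
        (nhds ((deriv φ 0) ^ 2 * V d d')) := by
  intro d d'
  -- basic objects
  set L : ℝ := deriv φ 0 with hLdef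
  set g : Ω → ℝ := fun ω => ∑ i, εW ω d i * ψ x i + εb ω d with hgdef
  set g' : Ω → ℝ := fun ω => ∑ i, εW ω d' i * ψ x i + εb ω d' with hg'def
  have hVg : V d d' = ∫ ω, g ω * g' ω := hV d d'
  set a : ℝ := (∑ i, μW d i * ψ x i) + μb d with hadef
  set a' : ℝ := (∑ i, μW d' i * ψ x i) + μb d' with ha'def
  set κ : ℝ := k + 2 with hκdef
  have hκ1 : 1 ≤ κ := by simp [hκdef]; linarith
  have hκ0 : 0 ≤ κ := by linarith
  set A : ℝ := Real.exp (κ * |a|) * Real.exp (κ * |a'|) with hAdef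
  have hA0 : 0 < A := by positivity
  set Ξ : Ω → ℝ := fun ω => Real.exp (κ * |g ω| + κ * |g' ω|) with hΞdef
  -- measurability
  have hmeasW : ∀ (e : Fin D) (i : Fin D), Measurable (fun ω => εW ω e i) :=
    fun e i => (measurable_pi_apply i).comp ((measurable_pi_apply e).comp hWmeas)
  have hmeasb : ∀ (e : Fin D), Measurable (fun ω => εb ω e) :=
    fun e => (measurable_pi_apply e).comp hbmeas
  have hmeasg : ∀ (e : Fin D), Measurable (fun ω => ∑ i, εW ω e i * ψ x i + εb ω e) := by
    intro e
    exact (Finset.measurable_sum _ (fun i _ => (hmeasW e i).mul_const _)).add (hmeasb e)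
  have hgm : Measurable g := hmeasg d
  have hg'm : Measurable g' := hmeasg d'
  have hΞm : Measurable Ξ := by
    refine Real.measurable_exp.comp ?_
    exact ((hgm.abs.const_mul κ).add (hg'm.abs.const_mul κ))
  -- exponential integrability
  have hexp : ∀ s s' : ℝ, Integrable (fun ω => Real.exp (s * g ω + s' * g' ω)) ℙ := by
    intro s s'
    set cW : Fin D × Fin D → ℝ := fun p =>
      (if p.1 = d then s * ψ x p.2 else 0) + (if p.1 = d' then s' * ψ x p.2 else 0) with hcW
    set cb : Fin D → ℝ := fun e => (if e = d then s else 0) + (if e = d' then s' else 0) with hcb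
    set FW : Ω → ℝ := fun ω => ∑ p : Fin D × Fin D, cW p * εW ω p.1 p.2 with hFW
    set Fb : Ω → ℝ := fun ω => ∑ e, cb e * εb ω e with hFb
    have hFWm : Measurable FW := Finset.measurable_sum _ (fun p _ => ((hmeasW p.1 p.2).const_mul _))
    have hFbm : Measurable Fb := Finset.measurable_sum _ (fun e _ => ((hmeasb e).const_mul _))
    have hsum : ∀ ω, s * g ω + s' * g' ω = FW ω + Fb ω := by
      intro ω
      have h1 : FW ω = (∑ i, (s * ψ x i) * εW ω d i) + (∑ i, (s' * ψ x i) * εW ω d' i) := by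
        rw [hFW]
        simp only [hcW, add_mul, Finset.sum_add_distrib]
        congr 1
        · exact sum_pick d (fun e i => εW ω e i) (fun i => s * ψ x i)
        · exact sum_pick d' (fun e i => εW ω e i) (fun i => s' * ψ x i)
      have h2 : Fb ω = s * εb ω d + s' * εb ω d' := by
        rw [hFb]
        simp only [hcb, add_mul, Finset.sum_add_distrib]
        congr 1
        · exact sum_pickb d (fun e => εb ω e) s
        · exact sum_pickb d' (fun e => εb ω e) s'
      have e1 : ∑ i, (s * ψ x i) * εW ω d i = s * ∑ i, εW ω d i * ψ x i := by
        rw [Finset.mul_sum]; exact Finset.sum_congr rfl (fun i _ => by ring)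
      have e2 : ∑ i, (s' * ψ x i) * εW ω d' i = s' * ∑ i, εW ω d' i * ψ x i := by
        rw [Finset.mul_sum]; exact Finset.sum_congr rfl (fun i _ => by ring)
      rw [h1, h2, e1, e2, hgdef, hg'def]
      simp only []
      ring
    have lawW := hWgauss cW
    have lawb := hbgauss cb
    have hIW : Integrable (fun ω => Real.exp (FW ω)) ℙ := by
      have h := (integrable_map_measure (μ := ℙ) (f := FW) (g := Real.exp) ?_ hFWm.aemeasurable).mp ?_
      · exact h
      · rw [lawW]; exact Real.continuous_exp.aestronglyMeasurable
      · rw [lawW]; exact gauss_int_exp' _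
    have hIb : Integrable (fun ω => Real.exp (Fb ω)) ℙ := by
      have h := (integrable_map_measure (μ := ℙ) (f := Fb) (g := Real.exp) ?_ hFbm.aemeasurable).mp ?_
      · exact h
      · rw [lawb]; exact Real.continuous_exp.aestronglyMeasurable
      · rw [lawb]; exact gauss_int_exp' _
    have hind2 : IndepFun (fun ω => Real.exp (FW ω)) (fun ω => Real.exp (Fb ω)) ℙ := by
      have hm1 : Measurable (fun m : Fin D → Fin D → ℝ =>
          Real.exp (∑ p : Fin D × Fin D, cW p * m p.1 p.2)) :=
        Real.measurable_exp.comp (Finset.measurable_sum _ (fun p _ => by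
          have hmm : Measurable fun m : Fin D → Fin D → ℝ => m p.1 p.2 :=
            (measurable_pi_apply p.2).comp (measurable_pi_apply p.1)
          exact hmm.const_mul _))
      have hm2 : Measurable (fun b : Fin D → ℝ => Real.exp (∑ e, cb e * b e)) :=
        Real.measurable_exp.comp (Finset.measurable_sum _ (fun e _ =>
          (measurable_pi_apply e).const_mul _))
      exact hindep.comp hm1 hm2
    have hprod := hind2.integrable_mul hIW hIb
    have heq : (fun ω => Real.exp (s * g ω + s' * g' ω))
        = (fun ω => Real.exp (FW ω)) * (fun ω => Real.exp (Fb ω)) := by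
      funext ω
      simp only [Pi.mul_apply, hsum ω, Real.exp_add]
    rw [heq]
    exact hprod
  -- integrability of Ξ
  have hΞpos : ∀ ω, 0 < Ξ ω := fun ω => Real.exp_pos _
  have hΞint : Integrable Ξ ℙ := by
    refine ((hexp κ κ).add ((hexp κ (-κ)).add ((hexp (-κ) κ).add
      (hexp (-κ) (-κ))))).mono' hΞm.aestronglyMeasurable
      (Filter.Eventually.of_forall fun ω => ?_)
    have e1 : Real.exp (κ * |g ω|) ≤ Real.exp (κ * g ω) + Real.exp (κ * -(g ω)) := by
      rcases abs_cases (g ω) with ⟨h,_⟩|⟨h,_⟩ <;> rw [h]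
      · exact le_add_of_nonneg_right (Real.exp_pos _).le
      · exact le_add_of_nonneg_left (Real.exp_pos _).le
    have e2 : Real.exp (κ * |g' ω|) ≤ Real.exp (κ * g' ω) + Real.exp (κ * -(g' ω)) := by
      rcases abs_cases (g' ω) with ⟨h,_⟩|⟨h,_⟩ <;> rw [h]
      · exact le_add_of_nonneg_right (Real.exp_pos _).le
      · exact le_add_of_nonneg_left (Real.exp_pos _).le
    have hnorm : ‖Ξ ω‖ = Ξ ω := by
      rw [Real.norm_eq_abs, abs_of_pos (hΞpos ω)]
    rw [hnorm]
    calc Ξ ω = Real.exp (κ * |g ω|) * Real.exp (κ * |g' ω|) := by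
          rw [hΞdef]; exact Real.exp_add _ _
      _ ≤ (Real.exp (κ * g ω) + Real.exp (κ * -(g ω)))
            * (Real.exp (κ * g' ω) + Real.exp (κ * -(g' ω))) :=
          mul_le_mul e1 e2 (Real.exp_pos _).le (by positivity)
      _ = _ := by
          simp only [Pi.add_apply, add_mul, mul_add, ← Real.exp_add]
          ring_nf
  set I : ℝ := ∫ ω, Ξ ω with hIdef
  have hI0 : 0 ≤ I := integral_nonneg (fun ω => (hΞpos ω).le)
  -- domination principle
  have hbound : ∀ (f : Ω → ℝ), AEStronglyMeasurable f ℙ → ∀ c : ℝ,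
      (∀ ω, |f ω| ≤ c * Ξ ω) → Integrable f ℙ ∧ |∫ ω, f ω| ≤ c * I := by
    intro f hf c hfc
    have hint : Integrable f ℙ := (hΞint.const_mul c).mono' hf
      (Filter.Eventually.of_forall fun ω => by simpa using hfc ω)
    refine ⟨hint, ?_⟩
    calc |∫ ω, f ω| ≤ ∫ ω, |f ω| := by
          simpa [Real.norm_eq_abs] using norm_integral_le_integral_norm (μ := ℙ) f
      _ ≤ ∫ ω, c * Ξ ω := integral_mono hint.abs (hΞint.const_mul c) hfc
      _ = c * I := by rw [integral_const_mul]
  -- mean zero and integrability of g, g'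
  have hgfacts : ∀ e : Fin D,
      Integrable (fun ω => ∑ i, εW ω e i * ψ x i + εb ω e) ℙ ∧
      (∫ ω, (∑ i, εW ω e i * ψ x i + εb ω e)) = 0 := by
    intro e
    set cW0 : Fin D × Fin D → ℝ := fun p => if p.1 = e then ψ x p.2 else 0 with hcW0
    set cb0 : Fin D → ℝ := fun i => if i = e then 1 else 0 with hcb0
    have hWfun : (fun ω => ∑ p : Fin D × Fin D, cW0 p * εW ω p.1 p.2)
        = fun ω => ∑ i, ψ x i * εW ω e i := by
      funext ω
      exact sum_pick e (fun e i => εW ω e i) (fun i => ψ x i)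
    have hbfun : (fun ω => ∑ i, cb0 i * εb ω i) = fun ω => εb ω e := by
      funext ω
      rw [hcb0]
      simp only []
      rw [sum_pickb e (fun i => εb ω i) 1, one_mul]
    have lawW := hWgauss cW0
    rw [hWfun] at lawW
    have lawb := hbgauss cb0
    rw [hbfun] at lawb
    have hm1 : Measurable (fun ω => ∑ i, ψ x i * εW ω e i) :=
      Finset.measurable_sum _ (fun i _ => (hmeasW e i).const_mul _)
    have hIW : Integrable (fun ω => ∑ i, ψ x i * εW ω e i) ℙ := by
      have h := (integrable_map_measure (μ := ℙ) (f := fun ω => ∑ i, ψ x i * εW ω e i)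
        (g := fun y : ℝ => y) ?_ hm1.aemeasurable).mp ?_
      · exact h
      · rw [lawW]; exact aestronglyMeasurable_id
      · rw [lawW]; exact gauss_int_id _
    have hIb : Integrable (fun ω => εb ω e) ℙ := by
      have h := (integrable_map_measure (μ := ℙ) (f := fun ω => εb ω e)
        (g := fun y : ℝ => y) ?_ (hmeasb e).aemeasurable).mp ?_
      · exact h
      · rw [lawb]; exact aestronglyMeasurable_id
      · rw [lawb]; exact gauss_int_id _
    have hEW : ∫ ω, (∑ i, ψ x i * εW ω e i) = 0 := by
      have h := integral_map (μ := ℙ) (φ := fun ω => ∑ i, ψ x i * εW ω e i)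
        (f := fun y : ℝ => y) hm1.aemeasurable ?_
      · rw [lawW, gauss_integral_id] at h
        exact h.symm
      · rw [lawW]; exact aestronglyMeasurable_id
    have hEb : ∫ ω, εb ω e = 0 := by
      have h := integral_map (μ := ℙ) (φ := fun ω => εb ω e)
        (f := fun y : ℝ => y) (hmeasb e).aemeasurable ?_
      · rw [lawb, gauss_integral_id] at h
        exact h.symm
      · rw [lawb]; exact aestronglyMeasurable_id
    have hswap : (fun ω => ∑ i, εW ω e i * ψ x i + εb ω e)
        = fun ω => (∑ i, ψ x i * εW ω e i) + εb ω e := by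
      funext ω
      congr 1
      exact Finset.sum_congr rfl (fun i _ => mul_comm _ _)
    constructor
    · rw [hswap]; exact hIW.add hIb
    · rw [hswap, integral_add hIW hIb, hEW, hEb, add_zero]
  have hIg : Integrable g ℙ := (hgfacts d).1
  have hIg' : Integrable g' ℙ := (hgfacts d').1
  have hEg : ∫ ω, g ω = 0 := (hgfacts d).2
  have hEg' : ∫ ω, g' ω = 0 := (hgfacts d').2
  -- |g| ≤ exp (κ |g|) etc.
  have habs_le_exp : ∀ t : ℝ, |t| ≤ Real.exp (κ * |t|) := by
    intro t
    have h1 : |t| ≤ Real.exp |t| := by linarith [Real.add_one_le_exp |t|]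
    refine h1.trans (Real.exp_le_exp.mpr ?_)
    nlinarith [abs_nonneg t]
  have hIgg' : Integrable (fun ω => g ω * g' ω) ℙ ∧ |∫ ω, g ω * g' ω| ≤ 1 * I := by
    refine hbound _ (hgm.mul hg'm).aestronglyMeasurable 1 (fun ω => ?_)
    rw [one_mul, Pi.mul_apply, abs_mul, hΞdef]
    simp only []
    rw [Real.exp_add]
    exact mul_le_mul (habs_le_exp _) (habs_le_exp _) (abs_nonneg _) (Real.exp_pos _).le
  -- the constant K
  set K : ℝ := 2 * (|L| * (C * A * I)) + C * C * A * I + |L| * |a| * (C * A * I)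
      + |L| * |a'| * (C * A * I) + (C * A * I) * (C * A * I) with hKdef
  -- main quantitative bound
  have key : ∀ T : ℝ, 0 < T → T ≤ 1 →
      |((∫ ω, Δx T ω d * Δx T ω d') - (∫ ω, Δx T ω d) * (∫ ω, Δx T ω d')) / T
        - L ^ 2 * V d d'| ≤ K * Real.sqrt T := by
    intro T hT hT1
    have hg2 : ∀ y : ℝ, |iteratedDeriv 2 φ y| ≤ C * Real.exp (k * |y|) :=
      fun y => le_trans (le_add_of_nonneg_right (abs_nonneg _)) (hgrowth y)
    set s : ℝ := Real.sqrt T with hsdef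
    have hs0 : 0 < s := Real.sqrt_pos.mpr hT
    have hss : s * s = T := Real.mul_self_sqrt hT.le
    have hs1 : s ≤ 1 := by
      rw [hsdef, show (1:ℝ) = Real.sqrt 1 by simp]
      exact Real.sqrt_le_sqrt hT1
    have hTs : T ≤ s := by
      calc T = s * s := hss.symm
        _ ≤ s * 1 := mul_le_mul_of_nonneg_left hs1 hs0.le
        _ = s := mul_one s
    set u : Ω → ℝ := fun ω => a * T + g ω * s with hudef
    set u' : Ω → ℝ := fun ω => a' * T + g' ω * s with hu'def
    set ρ : Ω → ℝ := fun ω => φ (u ω) - L * u ω with hρdef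
    set ρ' : Ω → ℝ := fun ω => φ (u' ω) - L * u' ω with hρ'def
    have harg : ∀ ω, (∑ i, (μW d i * T + εW ω d i * s) * ψ x i + (μb d * T + εb ω d * s)) = u ω := by
      intro ω
      have hterm : ∀ i ∈ Finset.univ, (μW d i * T + εW ω d i * s) * ψ x i
          = (μW d i * ψ x i) * T + (εW ω d i * ψ x i) * s := fun i _ => by ring
      rw [Finset.sum_congr rfl hterm, Finset.sum_add_distrib, ← Finset.sum_mul, ← Finset.sum_mul]
      simp only [hudef, hgdef, hadef]
      ring
    have harg' : ∀ ω, (∑ i, (μW d' i * T + εW ω d' i * s) * ψ x i + (μb d' * T + εb ω d' * s)) = u' ω := by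
      intro ω
      have hterm : ∀ i ∈ Finset.univ, (μW d' i * T + εW ω d' i * s) * ψ x i
          = (μW d' i * ψ x i) * T + (εW ω d' i * ψ x i) * s := fun i _ => by ring
      rw [Finset.sum_congr rfl hterm, Finset.sum_add_distrib, ← Finset.sum_mul, ← Finset.sum_mul]
      simp only [hu'def, hg'def, ha'def]
      ring
    have hΔd : ∀ ω, Δx T ω d = L * u ω + ρ ω := by
      intro ω
      rw [hΔx T ω d, harg ω]
      simp only [hρdef]
      ring
    have hΔd' : ∀ ω, Δx T ω d' = L * u' ω + ρ' ω := by
      intro ω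
      rw [hΔx T ω d', harg' ω]
      simp only [hρ'def]
      ring
    have hum : Measurable u := by
      simp only [hudef]
      exact measurable_const.add (hgm.mul_const s)
    have hu'm : Measurable u' := by
      simp only [hu'def]
      exact measurable_const.add (hg'm.mul_const s)
    have hρm : Measurable ρ := by
      simp only [hρdef]
      exact (hφ.continuous.measurable.comp hum).sub (hum.const_mul L)
    have hρ'm : Measurable ρ' := by
      simp only [hρ'def]
      exact (hφ.continuous.measurable.comp hu'm).sub (hu'm.const_mul L)
    set X : Ω → ℝ := fun ω => Real.exp (κ * |g ω|) with hXdef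
    set X' : Ω → ℝ := fun ω => Real.exp (κ * |g' ω|) with hX'def
    set EA : ℝ := Real.exp (κ * |a|) with hEAdef
    set EA' : ℝ := Real.exp (κ * |a'|) with hEA'def
    have hX1 : ∀ ω, 1 ≤ X ω := fun ω =>
      Real.one_le_exp (mul_nonneg hκ0 (abs_nonneg _))
    have hX'1 : ∀ ω, 1 ≤ X' ω := fun ω =>
      Real.one_le_exp (mul_nonneg hκ0 (abs_nonneg _))
    have hEA1 : 1 ≤ EA := Real.one_le_exp (mul_nonneg hκ0 (abs_nonneg _))
    have hEA'1 : 1 ≤ EA' := Real.one_le_exp (mul_nonneg hκ0 (abs_nonneg _))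
    have hΞeq : ∀ ω, Ξ ω = X ω * X' ω := fun ω => Real.exp_add _ _
    have hAeq : A = EA * EA' := rfl
    have hBle : ∀ ω, |a| + |g ω| ≤ EA * X ω := by
      intro ω
      have h0 : (0:ℝ) ≤ |a| + |g ω| := by positivity
      have h1 : |a| + |g ω| ≤ Real.exp (κ * (|a| + |g ω|)) := by
        have h2 := Real.add_one_le_exp (|a| + |g ω|)
        have h3 : Real.exp (|a| + |g ω|) ≤ Real.exp (κ * (|a| + |g ω|)) :=
          Real.exp_le_exp.mpr (le_mul_of_one_le_left h0 hκ1)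
        linarith
      refine h1.trans (le_of_eq ?_)
      rw [hEAdef, hXdef, ← Real.exp_add]
      congr 1
      ring
    have hB'le : ∀ ω, |a'| + |g' ω| ≤ EA' * X' ω := by
      intro ω
      have h0 : (0:ℝ) ≤ |a'| + |g' ω| := by positivity
      have h1 : |a'| + |g' ω| ≤ Real.exp (κ * (|a'| + |g' ω|)) := by
        have h2 := Real.add_one_le_exp (|a'| + |g' ω|)
        have h3 : Real.exp (|a'| + |g' ω|) ≤ Real.exp (κ * (|a'| + |g' ω|)) :=
          Real.exp_le_exp.mpr (le_mul_of_one_le_left h0 hκ1)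
        linarith
      refine h1.trans (le_of_eq ?_)
      rw [hEA'def, hX'def, ← Real.exp_add]
      congr 1
      ring
    have hu_abs : ∀ ω, |u ω| ≤ s * (|a| + |g ω|) := by
      intro ω
      simp only [hudef]
      calc |a * T + g ω * s| ≤ |a * T| + |g ω * s| := abs_add_le _ _
        _ = |a| * T + |g ω| * s := by rw [abs_mul, abs_mul, abs_of_pos hT, abs_of_pos hs0]
        _ ≤ s * (|a| + |g ω|) := by
            have h4 : |a| * T ≤ |a| * s := mul_le_mul_of_nonneg_left hTs (abs_nonneg a)
            have h5 : |g ω| * s = s * |g ω| := mul_comm _ _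
            have h6 : |a| * s = s * |a| := mul_comm _ _
            have h7 : s * (|a| + |g ω|) = s * |a| + s * |g ω| := mul_add _ _ _
            linarith
    have hu'_abs : ∀ ω, |u' ω| ≤ s * (|a'| + |g' ω|) := by
      intro ω
      simp only [hu'def]
      calc |a' * T + g' ω * s| ≤ |a' * T| + |g' ω * s| := abs_add_le _ _
        _ = |a'| * T + |g' ω| * s := by rw [abs_mul, abs_mul, abs_of_pos hT, abs_of_pos hs0]
        _ ≤ s * (|a'| + |g' ω|) := by
            have h4 : |a'| * T ≤ |a'| * s := mul_le_mul_of_nonneg_left hTs (abs_nonneg a')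
            have h5 : |g' ω| * s = s * |g' ω| := mul_comm _ _
            have h6 : |a'| * s = s * |a'| := mul_comm _ _
            have h7 : s * (|a'| + |g' ω|) = s * |a'| + s * |g' ω| := mul_add _ _ _
            linarith
    have hρ_abs : ∀ ω, |ρ ω| ≤ C * T * (EA * X ω) := by
      intro ω
      have ht : |ρ ω| ≤ C * (u ω)^2 * Real.exp (k * |u ω|) := taylor_bd hφ hφ0 hk.le hg2 (u ω)
      set B : ℝ := |a| + |g ω| with hB
      have hB0 : (0:ℝ) ≤ B := by positivity
      have h1 : |u ω| ≤ s * B := hu_abs ω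
      have h2 : |u ω| ≤ B := h1.trans (by
        calc s * B ≤ 1 * B := mul_le_mul_of_nonneg_right hs1 hB0
          _ = B := one_mul B)
      have h3 : (u ω)^2 ≤ T * B^2 := by
        have h31 : |u ω| * |u ω| ≤ (s * B) * (s * B) :=
          mul_le_mul h1 h1 (abs_nonneg _) (mul_nonneg hs0.le hB0)
        have h32 : (s * B) * (s * B) = T * B^2 := by linear_combination (B^2) * hss
        calc (u ω)^2 = |u ω| * |u ω| := by rw [abs_mul_abs_self, pow_two]
          _ ≤ (s * B) * (s * B) := h31
          _ = T * B^2 := h32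
      have h4 : Real.exp (k * |u ω|) ≤ Real.exp (k * B) :=
        Real.exp_le_exp.mpr (mul_le_mul_of_nonneg_left h2 hk.le)
      have h5 : C * (u ω)^2 * Real.exp (k * |u ω|) ≤ C * (T * B^2) * Real.exp (k * B) :=
        mul_le_mul (mul_le_mul_of_nonneg_left h3 hC) h4 (Real.exp_pos _).le
          (mul_nonneg hC (mul_nonneg hT.le (sq_nonneg B)))
      have h6 : B^2 * Real.exp (k * B) ≤ Real.exp (κ * B) := by
        rw [hκdef]
        exact sq_exp_le hk.le hB0
      have h7 : Real.exp (κ * B) = EA * X ω := by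
        rw [hEAdef, hXdef, ← Real.exp_add, hB]
        congr 1
        ring
      calc |ρ ω| ≤ C * (u ω)^2 * Real.exp (k * |u ω|) := ht
        _ ≤ C * (T * B^2) * Real.exp (k * B) := h5
        _ = C * T * (B^2 * Real.exp (k * B)) := by ring
        _ ≤ C * T * Real.exp (κ * B) := mul_le_mul_of_nonneg_left h6 (mul_nonneg hC hT.le)
        _ = C * T * (EA * X ω) := by rw [h7]
    have hρ'_abs : ∀ ω, |ρ' ω| ≤ C * T * (EA' * X' ω) := by
      intro ω
      have ht : |ρ' ω| ≤ C * (u' ω)^2 * Real.exp (k * |u' ω|) := taylor_bd hφ hφ0 hk.le hg2 (u' ω)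
      set B : ℝ := |a'| + |g' ω| with hB
      have hB0 : (0:ℝ) ≤ B := by positivity
      have h1 : |u' ω| ≤ s * B := hu'_abs ω
      have h2 : |u' ω| ≤ B := h1.trans (by
        calc s * B ≤ 1 * B := mul_le_mul_of_nonneg_right hs1 hB0
          _ = B := one_mul B)
      have h3 : (u' ω)^2 ≤ T * B^2 := by
        have h31 : |u' ω| * |u' ω| ≤ (s * B) * (s * B) :=
          mul_le_mul h1 h1 (abs_nonneg _) (mul_nonneg hs0.le hB0)
        have h32 : (s * B) * (s * B) = T * B^2 := by linear_combination (B^2) * hss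
        calc (u' ω)^2 = |u' ω| * |u' ω| := by rw [abs_mul_abs_self, pow_two]
          _ ≤ (s * B) * (s * B) := h31
          _ = T * B^2 := h32
      have h4 : Real.exp (k * |u' ω|) ≤ Real.exp (k * B) :=
        Real.exp_le_exp.mpr (mul_le_mul_of_nonneg_left h2 hk.le)
      have h5 : C * (u' ω)^2 * Real.exp (k * |u' ω|) ≤ C * (T * B^2) * Real.exp (k * B) :=
        mul_le_mul (mul_le_mul_of_nonneg_left h3 hC) h4 (Real.exp_pos _).le
          (mul_nonneg hC (mul_nonneg hT.le (sq_nonneg B)))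
      have h6 : B^2 * Real.exp (k * B) ≤ Real.exp (κ * B) := by
        rw [hκdef]
        exact sq_exp_le hk.le hB0
      have h7 : Real.exp (κ * B) = EA' * X' ω := by
        rw [hEA'def, hX'def, ← Real.exp_add, hB]
        congr 1
        ring
      calc |ρ' ω| ≤ C * (u' ω)^2 * Real.exp (k * |u' ω|) := ht
        _ ≤ C * (T * B^2) * Real.exp (k * B) := h5
        _ = C * T * (B^2 * Real.exp (k * B)) := by ring
        _ ≤ C * T * Real.exp (κ * B) := mul_le_mul_of_nonneg_left h6 (mul_nonneg hC hT.le)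
        _ = C * T * (EA' * X' ω) := by rw [h7]
    have hu_le : ∀ ω, |u ω| ≤ s * (EA * X ω) :=
      fun ω => (hu_abs ω).trans (mul_le_mul_of_nonneg_left (hBle ω) hs0.le)
    have hu'_le : ∀ ω, |u' ω| ≤ s * (EA' * X' ω) :=
      fun ω => (hu'_abs ω).trans (mul_le_mul_of_nonneg_left (hB'le ω) hs0.le)
    -- Ξ bounds
    have hXpos : ∀ ω, (0:ℝ) < X ω := fun ω => Real.exp_pos _
    have hX'pos : ∀ ω, (0:ℝ) < X' ω := fun ω => Real.exp_pos _
    have hEA0 : (0:ℝ) < EA := Real.exp_pos _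
    have hEA'0 : (0:ℝ) < EA' := Real.exp_pos _
    have h1x : ∀ ω, (1:ℝ) ≤ EA' * X' ω := by
      intro ω
      calc (1:ℝ) = 1 * 1 := by norm_num
        _ ≤ EA' * X' ω := mul_le_mul hEA'1 (hX'1 ω) zero_le_one hEA'0.le
    have h1x' : ∀ ω, (1:ℝ) ≤ EA * X ω := by
      intro ω
      calc (1:ℝ) = 1 * 1 := by norm_num
        _ ≤ EA * X ω := mul_le_mul hEA1 (hX1 ω) zero_le_one hEA0.le
    have bρ : ∀ ω, |ρ ω| ≤ (C * A * T) * Ξ ω := by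
      intro ω
      refine (hρ_abs ω).trans ?_
      rw [hΞeq ω, hAeq]
      calc C * T * (EA * X ω) ≤ C * T * ((EA * X ω) * (EA' * X' ω)) :=
            mul_le_mul_of_nonneg_left
              (le_mul_of_one_le_right (mul_nonneg hEA0.le (hXpos ω).le) (h1x ω))
              (mul_nonneg hC hT.le)
        _ = C * (EA * EA') * T * (X ω * X' ω) := by ring
    have bρ' : ∀ ω, |ρ' ω| ≤ (C * A * T) * Ξ ω := by
      intro ω
      refine (hρ'_abs ω).trans ?_
      rw [hΞeq ω, hAeq]
      calc C * T * (EA' * X' ω) ≤ C * T * ((EA * X ω) * (EA' * X' ω)) :=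
            mul_le_mul_of_nonneg_left
              (le_mul_of_one_le_left (mul_nonneg hEA'0.le (hX'pos ω).le) (h1x' ω))
              (mul_nonneg hC hT.le)
        _ = C * (EA * EA') * T * (X ω * X' ω) := by ring
    have buρ' : ∀ ω, |u ω * ρ' ω| ≤ (C * A * (T * s)) * Ξ ω := by
      intro ω
      rw [abs_mul]
      have h := mul_le_mul (hu_le ω) (hρ'_abs ω) (abs_nonneg _)
        (mul_nonneg hs0.le (mul_nonneg hEA0.le (hXpos ω).le))
      refine h.trans (le_of_eq ?_)
      rw [hΞeq ω, hAeq]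
      ring
    have bu'ρ : ∀ ω, |u' ω * ρ ω| ≤ (C * A * (T * s)) * Ξ ω := by
      intro ω
      rw [abs_mul]
      have h := mul_le_mul (hu'_le ω) (hρ_abs ω) (abs_nonneg _)
        (mul_nonneg hs0.le (mul_nonneg hEA'0.le (hX'pos ω).le))
      refine h.trans (le_of_eq ?_)
      rw [hΞeq ω, hAeq]
      ring
    have bρρ' : ∀ ω, |ρ ω * ρ' ω| ≤ (C * C * A * (T * s)) * Ξ ω := by
      intro ω
      rw [abs_mul]
      have h := mul_le_mul (hρ_abs ω) (hρ'_abs ω) (abs_nonneg _)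
        (mul_nonneg (mul_nonneg hC hT.le) (mul_nonneg hEA0.le (hXpos ω).le))
      refine h.trans ?_
      have heq : C * T * (EA * X ω) * (C * T * (EA' * X' ω))
          = (C * C * A * (T * T)) * Ξ ω := by
        rw [hΞeq ω, hAeq]
        ring
      rw [heq]
      have hTT : T * T ≤ T * s := mul_le_mul_of_nonneg_left hTs hT.le
      exact mul_le_mul_of_nonneg_right
        (mul_le_mul_of_nonneg_left hTT (mul_nonneg (mul_nonneg hC hC) hA0.le))
        (hΞpos ω).le
    obtain ⟨hIρ, hEρb⟩ := hbound ρ hρm.aestronglyMeasurable (C * A * T) bρ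
    obtain ⟨hIρ', hEρ'b⟩ := hbound ρ' hρ'm.aestronglyMeasurable (C * A * T) bρ'
    obtain ⟨hIuρ', hEuρ'b⟩ := hbound (fun ω => u ω * ρ' ω)
      (hum.mul hρ'm).aestronglyMeasurable (C * A * (T * s)) buρ'
    obtain ⟨hIu'ρ, hEu'ρb⟩ := hbound (fun ω => u' ω * ρ ω)
      (hu'm.mul hρm).aestronglyMeasurable (C * A * (T * s)) bu'ρ
    obtain ⟨hIρρ', hEρρ'b⟩ := hbound (fun ω => ρ ω * ρ' ω)
      (hρm.mul hρ'm).aestronglyMeasurable (C * C * A * (T * s)) bρρ'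
    -- integrals of linear parts
    have hIu : Integrable u ℙ := by
      simp only [hudef]
      exact (integrable_const _).add (hIg.mul_const s)
    have hIu' : Integrable u' ℙ := by
      simp only [hu'def]
      exact (integrable_const _).add (hIg'.mul_const s)
    have hEu : ∫ ω, u ω = a * T := by
      simp only [hudef]
      rw [integral_add (integrable_const _) (hIg.mul_const s), integral_const,
        integral_mul_const, hEg]
      simp [measure_univ]
    have hEu' : ∫ ω, u' ω = a' * T := by
      simp only [hu'def]
      rw [integral_add (integrable_const _) (hIg'.mul_const s), integral_const,
        integral_mul_const, hEg']
      simp [measure_univ]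
    have hEX : ∫ ω, Δx T ω d = L * (a * T) + ∫ ω, ρ ω := by
      rw [show (fun ω => Δx T ω d) = fun ω => L * u ω + ρ ω from funext hΔd]
      rw [integral_add (hIu.const_mul L) hIρ, integral_const_mul, hEu]
    have hEX' : ∫ ω, Δx T ω d' = L * (a' * T) + ∫ ω, ρ' ω := by
      rw [show (fun ω => Δx T ω d') = fun ω => L * u' ω + ρ' ω from funext hΔd']
      rw [integral_add (hIu'.const_mul L) hIρ', integral_const_mul, hEu']
    have hptw : ∀ ω, Δx T ω d * Δx T ω d' =
        L^2*(a*a')*T^2 + ((L^2*(a*T*s)) * g' ω + ((L^2*(a'*T*s)) * g ω + ((L^2*T) * (g ω * g' ω)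
          + (L * (u ω * ρ' ω) + (L * (u' ω * ρ ω) + ρ ω * ρ' ω))))) := by
      intro ω
      rw [hΔd ω, hΔd' ω]
      simp only [hρdef, hρ'def, hudef, hu'def]
      linear_combination (L^2 * g ω * g' ω) * hss
    have i1 : Integrable (fun ω => (L^2*(a*T*s)) * g' ω) ℙ := hIg'.const_mul _
    have i2 : Integrable (fun ω => (L^2*(a'*T*s)) * g ω) ℙ := hIg.const_mul _
    have i3 : Integrable (fun ω => (L^2*T) * (g ω * g' ω)) ℙ := hIgg'.1.const_mul _
    have i4 : Integrable (fun ω => L * (u ω * ρ' ω)) ℙ := hIuρ'.const_mul L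
    have i5 : Integrable (fun ω => L * (u' ω * ρ ω)) ℙ := hIu'ρ.const_mul L
    have hEXY : ∫ ω, Δx T ω d * Δx T ω d'
        = L^2*(a*a')*T^2 + L^2*T*(∫ ω, g ω * g' ω) + L*(∫ ω, u ω * ρ' ω)
          + L*(∫ ω, u' ω * ρ ω) + ∫ ω, ρ ω * ρ' ω := by
      rw [show (fun ω => Δx T ω d * Δx T ω d') = _ from funext hptw]
      have j5 : Integrable (fun ω => L * (u' ω * ρ ω) + ρ ω * ρ' ω) ℙ := i5.add hIρρ'
      have j4 : Integrable (fun ω => L * (u ω * ρ' ω)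
          + (L * (u' ω * ρ ω) + ρ ω * ρ' ω)) ℙ := i4.add j5
      have j3 : Integrable (fun ω => (L^2*T) * (g ω * g' ω)
          + (L * (u ω * ρ' ω) + (L * (u' ω * ρ ω) + ρ ω * ρ' ω))) ℙ := i3.add j4
      have j2 : Integrable (fun ω => (L^2*(a'*T*s)) * g ω + ((L^2*T) * (g ω * g' ω)
          + (L * (u ω * ρ' ω) + (L * (u' ω * ρ ω) + ρ ω * ρ' ω)))) ℙ := i2.add j3
      have j1 : Integrable (fun ω => (L^2*(a*T*s)) * g' ω + ((L^2*(a'*T*s)) * g ω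
          + ((L^2*T) * (g ω * g' ω)
          + (L * (u ω * ρ' ω) + (L * (u' ω * ρ ω) + ρ ω * ρ' ω))))) ℙ := i1.add j2
      rw [integral_add (integrable_const _) j1, integral_add i1 j2, integral_add i2 j3,
        integral_add i3 j4, integral_add i4 j5, integral_add i5 hIρρ']
      rw [integral_const, integral_const_mul, integral_const_mul, integral_const_mul,
        integral_const_mul, integral_const_mul, hEg, hEg']
      simp [measure_univ]
      ring
    have hcovnum : ((∫ ω, Δx T ω d * Δx T ω d') - (∫ ω, Δx T ω d) * (∫ ω, Δx T ω d'))
        = L^2*T*(V d d') + (L*(∫ ω, u ω * ρ' ω) + L*(∫ ω, u' ω * ρ ω) + (∫ ω, ρ ω * ρ' ω)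
          - L*(a*T)*(∫ ω, ρ' ω) - L*(a'*T)*(∫ ω, ρ ω) - (∫ ω, ρ ω)*(∫ ω, ρ' ω)) := by
      rw [hEXY, hEX, hEX', hVg]
      ring
    set N : ℝ := L*(∫ ω, u ω * ρ' ω) + L*(∫ ω, u' ω * ρ ω) + (∫ ω, ρ ω * ρ' ω)
      - L*(a*T)*(∫ ω, ρ' ω) - L*(a'*T)*(∫ ω, ρ ω) - (∫ ω, ρ ω)*(∫ ω, ρ' ω) with hN
    have hgoal_eq : ((∫ ω, Δx T ω d * Δx T ω d') - (∫ ω, Δx T ω d) * (∫ ω, Δx T ω d')) / T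
        - L ^ 2 * V d d' = N / T := by
      have hT0 : T ≠ 0 := ne_of_gt hT
      rw [hcovnum, hN]
      field_simp
      ring
    have hTT : T * T ≤ T * s := mul_le_mul_of_nonneg_left hTs hT.le
    have hCAI : (0:ℝ) ≤ C * A * I := mul_nonneg (mul_nonneg hC hA0.le) hI0
    have m1 : |L*(∫ ω, u ω * ρ' ω)| ≤ (|L| * (C * A * I)) * (T * s) := by
      rw [abs_mul]
      calc |L| * |∫ ω, u ω * ρ' ω| ≤ |L| * ((C * A * (T * s)) * I) :=
            mul_le_mul_of_nonneg_left hEuρ'b (abs_nonneg L)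
        _ = (|L| * (C * A * I)) * (T * s) := by ring
    have m2 : |L*(∫ ω, u' ω * ρ ω)| ≤ (|L| * (C * A * I)) * (T * s) := by
      rw [abs_mul]
      calc |L| * |∫ ω, u' ω * ρ ω| ≤ |L| * ((C * A * (T * s)) * I) :=
            mul_le_mul_of_nonneg_left hEu'ρb (abs_nonneg L)
        _ = (|L| * (C * A * I)) * (T * s) := by ring
    have m3 : |∫ ω, ρ ω * ρ' ω| ≤ (C * C * A * I) * (T * s) := by
      refine hEρρ'b.trans (le_of_eq ?_)
      ring
    have m4 : |L*(a*T)*(∫ ω, ρ' ω)| ≤ (|L| * |a| * (C * A * I)) * (T * s) := by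
      have heq4 : |L*(a*T)*(∫ ω, ρ' ω)| = |L| * |a| * T * |∫ ω, ρ' ω| := by
        rw [abs_mul, abs_mul, abs_mul, abs_of_pos hT]
        ring
      rw [heq4]
      calc |L| * |a| * T * |∫ ω, ρ' ω| ≤ |L| * |a| * T * ((C * A * T) * I) :=
            mul_le_mul_of_nonneg_left hEρ'b
              (mul_nonneg (mul_nonneg (abs_nonneg _) (abs_nonneg _)) hT.le)
        _ = (|L| * |a| * (C * A * I)) * (T * T) := by ring
        _ ≤ (|L| * |a| * (C * A * I)) * (T * s) :=
            mul_le_mul_of_nonneg_left hTT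
              (mul_nonneg (mul_nonneg (abs_nonneg _) (abs_nonneg _)) hCAI)
    have m5 : |L*(a'*T)*(∫ ω, ρ ω)| ≤ (|L| * |a'| * (C * A * I)) * (T * s) := by
      have heq5 : |L*(a'*T)*(∫ ω, ρ ω)| = |L| * |a'| * T * |∫ ω, ρ ω| := by
        rw [abs_mul, abs_mul, abs_mul, abs_of_pos hT]
        ring
      rw [heq5]
      calc |L| * |a'| * T * |∫ ω, ρ ω| ≤ |L| * |a'| * T * ((C * A * T) * I) :=
            mul_le_mul_of_nonneg_left hEρb
              (mul_nonneg (mul_nonneg (abs_nonneg _) (abs_nonneg _)) hT.le)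
        _ = (|L| * |a'| * (C * A * I)) * (T * T) := by ring
        _ ≤ (|L| * |a'| * (C * A * I)) * (T * s) :=
            mul_le_mul_of_nonneg_left hTT
              (mul_nonneg (mul_nonneg (abs_nonneg _) (abs_nonneg _)) hCAI)
    have m6 : |(∫ ω, ρ ω)*(∫ ω, ρ' ω)| ≤ ((C * A * I) * (C * A * I)) * (T * s) := by
      rw [abs_mul]
      calc |∫ ω, ρ ω| * |∫ ω, ρ' ω| ≤ ((C * A * T) * I) * ((C * A * T) * I) :=
            mul_le_mul hEρb hEρ'b (abs_nonneg _)
              (mul_nonneg (mul_nonneg (mul_nonneg hC hA0.le) hT.le) hI0)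
        _ = ((C * A * I) * (C * A * I)) * (T * T) := by ring
        _ ≤ ((C * A * I) * (C * A * I)) * (T * s) :=
            mul_le_mul_of_nonneg_left hTT (mul_nonneg hCAI hCAI)
    have htri : |N| ≤ |L*(∫ ω, u ω * ρ' ω)| + |L*(∫ ω, u' ω * ρ ω)| + |∫ ω, ρ ω * ρ' ω|
        + |L*(a*T)*(∫ ω, ρ' ω)| + |L*(a'*T)*(∫ ω, ρ ω)| + |(∫ ω, ρ ω)*(∫ ω, ρ' ω)| := by
      rw [hN]
      calc |L*(∫ ω, u ω * ρ' ω) + L*(∫ ω, u' ω * ρ ω) + (∫ ω, ρ ω * ρ' ω)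
            - L*(a*T)*(∫ ω, ρ' ω) - L*(a'*T)*(∫ ω, ρ ω) - (∫ ω, ρ ω)*(∫ ω, ρ' ω)|
          ≤ |L*(∫ ω, u ω * ρ' ω) + L*(∫ ω, u' ω * ρ ω) + (∫ ω, ρ ω * ρ' ω)
            - L*(a*T)*(∫ ω, ρ' ω) - L*(a'*T)*(∫ ω, ρ ω)| + |(∫ ω, ρ ω)*(∫ ω, ρ' ω)| :=
            abs_sub _ _
        _ ≤ |L*(∫ ω, u ω * ρ' ω) + L*(∫ ω, u' ω * ρ ω) + (∫ ω, ρ ω * ρ' ω)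
            - L*(a*T)*(∫ ω, ρ' ω)| + |L*(a'*T)*(∫ ω, ρ ω)| + |(∫ ω, ρ ω)*(∫ ω, ρ' ω)| := by
            have := abs_sub (L*(∫ ω, u ω * ρ' ω) + L*(∫ ω, u' ω * ρ ω) + (∫ ω, ρ ω * ρ' ω)
              - L*(a*T)*(∫ ω, ρ' ω)) (L*(a'*T)*(∫ ω, ρ ω))
            linarith
        _ ≤ |L*(∫ ω, u ω * ρ' ω) + L*(∫ ω, u' ω * ρ ω) + (∫ ω, ρ ω * ρ' ω)|
            + |L*(a*T)*(∫ ω, ρ' ω)| + |L*(a'*T)*(∫ ω, ρ ω)| + |(∫ ω, ρ ω)*(∫ ω, ρ' ω)| := by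
            have := abs_sub (L*(∫ ω, u ω * ρ' ω) + L*(∫ ω, u' ω * ρ ω) + (∫ ω, ρ ω * ρ' ω))
              (L*(a*T)*(∫ ω, ρ' ω))
            linarith
        _ ≤ |L*(∫ ω, u ω * ρ' ω)| + |L*(∫ ω, u' ω * ρ ω)| + |∫ ω, ρ ω * ρ' ω|
            + |L*(a*T)*(∫ ω, ρ' ω)| + |L*(a'*T)*(∫ ω, ρ ω)| + |(∫ ω, ρ ω)*(∫ ω, ρ' ω)| := by
            have h1 := abs_add_le (L*(∫ ω, u ω * ρ' ω) + L*(∫ ω, u' ω * ρ ω)) (∫ ω, ρ ω * ρ' ω)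
            have h2 := abs_add_le (L*(∫ ω, u ω * ρ' ω)) (L*(∫ ω, u' ω * ρ ω))
            linarith
    have hNb : |N| ≤ K * (T * s) := by
      have hsumK : (|L| * (C * A * I)) * (T * s) + (|L| * (C * A * I)) * (T * s)
          + (C * C * A * I) * (T * s) + (|L| * |a| * (C * A * I)) * (T * s)
          + (|L| * |a'| * (C * A * I)) * (T * s)
          + ((C * A * I) * (C * A * I)) * (T * s) = K * (T * s) := by
        rw [hKdef]
        ring
      linarith [m1, m2, m3, m4, m5, m6, htri]
    rw [hgoal_eq, abs_div, abs_of_pos hT, div_le_iff₀ hT]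
    calc |N| ≤ K * (T * s) := hNb
      _ = K * s * T := by ring
  -- conclude
  have hKs : Tendsto (fun T : ℝ => K * Real.sqrt T) (nhdsWithin 0 (Set.Ioi 0)) (nhds 0) := by
    have h : Tendsto (fun T : ℝ => K * Real.sqrt T) (nhds (0:ℝ)) (nhds (K * Real.sqrt 0)) :=
      ((continuous_const (y := K)).mul Real.continuous_sqrt).tendsto 0
    simp only [Real.sqrt_zero, mul_zero] at h
    exact h.mono_left nhdsWithin_le_nhds
  have hev : ∀ᶠ T in nhdsWithin (0:ℝ) (Set.Ioi 0),
      ‖(((∫ ω, Δx T ω d * Δx T ω d') - (∫ ω, Δx T ω d) * (∫ ω, Δx T ω d')) / T)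
        - L ^ 2 * V d d'‖ ≤ K * Real.sqrt T := by
    have h1 : Set.Iio (1:ℝ) ∈ nhds (0:ℝ) := Iio_mem_nhds (by norm_num)
    filter_upwards [self_mem_nhdsWithin, mem_nhdsWithin_of_mem_nhds h1] with T hT hT1
    simpa [Real.norm_eq_abs] using key T hT (le_of_lt hT1)
  have hmain : Tendsto (fun T : ℝ =>
      (((∫ ω, Δx T ω d * Δx T ω d') - (∫ ω, Δx T ω d) * (∫ ω, Δx T ω d')) / T)
        - L ^ 2 * V d d') (nhdsWithin 0 (Set.Ioi 0)) (nhds 0) :=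
    squeeze_zero_norm' hev hKs
  have := hmain.add_const (L ^ 2 * V d d')
  simpa using this
end

section
/- Under the same residual recursion, for δ = 2 the higher moment condition holds: lim_{Δt↓0} E[(x_{t+Δt,d} − x_{t,d})⁴ | x_t = x]/Δt = 0 for every coordinate d and every fixed x. -/
open MeasureTheory ProbabilityTheory Filter
open scoped NNReal ENNReal

lemma gauss_exp_int (c : ℝ) (v : ℝ≥0) :
    Integrable (fun y => Real.exp (c * y)) (gaussianReal 0 v) := by
  by_cases hv : v = 0
  · subst hv
    rw [gaussianReal_zero_var]
    exact (integrable_congr (ae_eq_dirac _)).mpr (integrable_const _)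
  · rw [gaussianReal_of_var_ne_zero _ hv,
      integrable_withDensity_iff (measurable_gaussianPDF _ _)
        (ae_of_all _ fun _ => ENNReal.ofReal_lt_top)]
    have hv0 : (0:ℝ) < (v:ℝ) := by
      exact_mod_cast (show (0:ℝ≥0) ≤ v from zero_le).lt_of_ne (Ne.symm hv)
    have hint : Integrable (fun y : ℝ =>
        ((Real.sqrt (2 * Real.pi * v))⁻¹ * Real.exp (c^2 * v / 2)) *
          Real.exp (-(2*(v:ℝ))⁻¹ * (y - c * v)^2)) := by
      exact ((integrable_exp_neg_mul_sq (by positivity)).comp_sub_right (c * v)).const_mul _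
    refine hint.congr (ae_of_all _ fun y => ?_)
    show _ = Real.exp (c * y) * (ENNReal.ofReal (gaussianPDFReal 0 v y)).toReal
    rw [ENNReal.toReal_ofReal (gaussianPDFReal_nonneg _ _ _), gaussianPDFReal]
    simp only []
    rw [mul_comm (Real.exp (c * y)), mul_assoc, ← Real.exp_add]
    conv_rhs => rw [mul_assoc, ← Real.exp_add]
    congr 1
    have h2v : (2:ℝ) * v ≠ 0 := by positivity
    field_simp
    ring

lemma phi4_bound (φ : ℝ → ℝ) (hφ : ContDiff ℝ 3 φ) (hφ0 : φ 0 = 0) (k C : ℝ)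
    (hC : 0 ≤ C) (hk : 0 ≤ k)
    (hg2 : ∀ y, |iteratedDeriv 2 φ y| ≤ C * Real.exp (k * |y|)) (z : ℝ) :
    (φ z)^4 ≤ (|deriv φ 0| + C)^4 * z^4 * Real.exp ((4*k+4) * |z|) := by
  set A0 := |deriv φ 0| with hA0
  have hA0nn : 0 ≤ A0 := abs_nonneg _
  set M := C * Real.exp (k * |z|) with hM
  have hM0 : 0 ≤ M := mul_nonneg hC (Real.exp_pos _).le
  have habs : ∀ t ∈ Set.uIcc 0 z, |t| ≤ |z| := by
    intro t ht
    rw [Set.mem_uIcc] at ht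
    rcases ht with ⟨h1, h2⟩ | ⟨h1, h2⟩
    · rw [abs_of_nonneg h1, abs_of_nonneg (h1.trans h2)]; exact h2
    · rw [abs_of_nonpos h2, abs_of_nonpos (h1.trans h2)]; linarith
  have hdiff : Differentiable ℝ φ := hφ.differentiable (by norm_num)
  have hdiff1 : Differentiable ℝ (deriv φ) := by
    have := hφ.differentiable_iteratedDeriv 1 (by norm_num)
    rwa [iteratedDeriv_one] at this
  have hdd : deriv (deriv φ) = iteratedDeriv 2 φ := by
    rw [iteratedDeriv_succ, iteratedDeriv_one]
  have hb2 : ∀ t ∈ Set.uIcc 0 z, ‖deriv (deriv φ) t‖ ≤ M := by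
    intro t ht
    rw [Real.norm_eq_abs, hdd]
    refine (hg2 t).trans ?_
    exact mul_le_mul_of_nonneg_left
      (Real.exp_le_exp.mpr (mul_le_mul_of_nonneg_left (habs t ht) hk)) hC
  have hstep1 : ∀ t ∈ Set.uIcc 0 z, |deriv φ t - deriv φ 0| ≤ M * |z| := by
    intro t ht
    have h := Convex.norm_image_sub_le_of_norm_deriv_le (f := deriv φ)
      (fun u _ => hdiff1 u) hb2 (convex_uIcc 0 z) Set.left_mem_uIcc ht
    rw [Real.norm_eq_abs, Real.norm_eq_abs, sub_zero] at h
    exact h.trans (mul_le_mul_of_nonneg_left (habs t ht) hM0)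
  set g : ℝ → ℝ := fun t => φ t - deriv φ 0 * t with hgdef
  have hgd : ∀ t, HasDerivWithinAt g (deriv φ t - deriv φ 0) (Set.uIcc 0 z) t := by
    intro t
    have h1 : HasDerivAt (fun y : ℝ => deriv φ 0 * y) (deriv φ 0) t := by
      simpa using (hasDerivAt_id t).const_mul (deriv φ 0)
    exact ((hdiff t).hasDerivAt.sub h1).hasDerivWithinAt
  have hstep2 := Convex.norm_image_sub_le_of_norm_hasDerivWithin_le
    (f := g) (f' := fun t => deriv φ t - deriv φ 0) (fun t ht => hgd t)
    (fun t ht => by rw [Real.norm_eq_abs]; exact hstep1 t ht)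
    (convex_uIcc 0 z) Set.left_mem_uIcc Set.right_mem_uIcc
  have hg0 : g 0 = 0 := by simp [hgdef, hφ0]
  rw [hg0, sub_zero, sub_zero, Real.norm_eq_abs, Real.norm_eq_abs] at hstep2
  have h5 : |φ z| ≤ A0 * |z| + M * |z| * |z| := by
    have h := abs_add_le (g z) (deriv φ 0 * z)
    have hgz : g z + deriv φ 0 * z = φ z := by simp [hgdef]
    rw [hgz] at h
    rw [abs_mul] at h
    calc |φ z| ≤ |g z| + A0 * |z| := h
      _ ≤ M * |z| * |z| + A0 * |z| := by linarith [hstep2]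
      _ = A0 * |z| + M * |z| * |z| := by ring
  have hz1 : |z| ≤ Real.exp ((1:ℝ) * |z|) := by
    rw [one_mul]
    linarith [Real.add_one_le_exp |z|]
  have hexp1 : (1:ℝ) ≤ Real.exp ((k+1) * |z|) := by
    rw [← Real.exp_zero]
    exact Real.exp_le_exp.mpr (by positivity)
  have hexp2 : Real.exp (k * |z|) * |z| ≤ Real.exp ((k+1) * |z|) := by
    have h : Real.exp ((k+1) * |z|) = Real.exp (k * |z|) * Real.exp ((1:ℝ) * |z|) := by
      rw [← Real.exp_add]; ring_nf
    rw [h]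
    exact mul_le_mul_of_nonneg_left hz1 (Real.exp_pos _).le
  have h6 : |φ z| ≤ (A0 + C) * (|z| * Real.exp ((k+1) * |z|)) := by
    have hMz : M * |z| ≤ C * Real.exp ((k+1) * |z|) := by
      rw [hM, mul_assoc]
      exact mul_le_mul_of_nonneg_left hexp2 hC
    nlinarith [abs_nonneg z, abs_nonneg (φ z), mul_le_mul_of_nonneg_right hMz (abs_nonneg z),
      mul_le_mul_of_nonneg_left hexp1 (mul_nonneg hA0nn (abs_nonneg z))]
  have h7 : (φ z)^4 ≤ ((A0 + C) * (|z| * Real.exp ((k+1) * |z|)))^4 := by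
    have h : (φ z)^4 = |φ z|^4 := by
      rw [← abs_pow, abs_of_nonneg (by positivity)]
    rw [h]
    exact pow_le_pow_left₀ (abs_nonneg _) h6 4
  refine h7.trans_eq ?_
  rw [mul_pow, mul_pow, ← abs_pow, abs_of_nonneg (by positivity : (0:ℝ) ≤ z^4),
    ← Real.exp_nat_mul]
  ring_nf


/-- Under the residual recursion, for `δ = 2` the higher-moment
condition of Assumption 1 holds: `lim_{Δt↓0} E[(Δx_d)⁴ | x]/Δt = 0` for every
coordinate `d` and every fixed state `x`. -/
theorem stmt_12 {Ω : Type*} [MeasureSpace Ω] [IsProbabilityMeasure (ℙ : Measure Ω)]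
    {D : ℕ} (ψ : (Fin D → ℝ) → (Fin D → ℝ)) (x : Fin D → ℝ)
    (φ : ℝ → ℝ) (hφ : ContDiff ℝ 3 φ) (hφ0 : φ 0 = 0)
    (k C : ℝ) (hk : 0 < k) (hC : 0 ≤ C)
    (hgrowth : ∀ y : ℝ,
      |iteratedDeriv 2 φ y| + |iteratedDeriv 3 φ y| ≤ C * Real.exp (k * |y|))
    (μW : Matrix (Fin D) (Fin D) ℝ) (μb : Fin D → ℝ)
    (SW : Matrix (Fin D × Fin D) (Fin D × Fin D) ℝ) (Sb : Matrix (Fin D) (Fin D) ℝ)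
    (hSW : SW.PosSemidef) (hSb : Sb.PosSemidef)
    (εW : Ω → Fin D → Fin D → ℝ) (εb : Ω → Fin D → ℝ)
    (hWmeas : Measurable εW) (hbmeas : Measurable εb)
    -- ε^W is a centered Gaussian matrix with covariance SW between its entries:
    (hWgauss : ∀ c : Fin D × Fin D → ℝ,
      Measure.map (fun ω => ∑ p : Fin D × Fin D, c p * εW ω p.1 p.2) ℙ
        = gaussianReal 0 ((∑ p : Fin D × Fin D, ∑ q : Fin D × Fin D,
            c p * SW p q * c q).toNNReal))
    -- ε^b is a centered Gaussian vector with covariance Sb: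
    (hbgauss : ∀ c : Fin D → ℝ,
      Measure.map (fun ω => ∑ d, c d * εb ω d) ℙ
        = gaussianReal 0 ((∑ d, ∑ d', c d * Sb d d' * c d').toNNReal))
    (hindep : IndepFun εW εb ℙ)
    -- the increment of the residual recursion, conditionally on the state x:
    (Δx : ℝ → Ω → Fin D → ℝ)
    (hΔx : ∀ Δt ω d, Δx Δt ω d
      = φ (∑ i, (μW d i * Δt + εW ω d i * Real.sqrt Δt) * ψ x i
            + (μb d * Δt + εb ω d * Real.sqrt Δt)))
    -- the covariance matrix V(x) of ε^W ψ(x) + ε^b: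
    (V : Matrix (Fin D) (Fin D) ℝ)
    (hV : ∀ d d', V d d' = ∫ ω, (∑ i, εW ω d i * ψ x i + εb ω d)
                              * (∑ i, εW ω d' i * ψ x i + εb ω d')) :
    ∀ d : Fin D,
      Tendsto (fun Δt : ℝ => (∫ ω, (Δx Δt ω d) ^ 4) / Δt)
        (nhdsWithin 0 (Set.Ioi 0)) (nhds 0) := by
  intro d
  -- basic objects
  set A : Ω → ℝ := fun ω => ∑ i, εW ω d i * ψ x i with hAdef
  set B : Ω → ℝ := fun ω => εb ω d with hBdef
  set m0 : ℝ := (∑ i, μW d i * ψ x i) + μb d with hm0def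
  set c1 : ℝ := 4 * k + 5 with hc1def
  set FW : Ω → ℝ := fun ω => Real.exp (c1 * A ω) + Real.exp (-c1 * A ω) with hFWdef
  set FB : Ω → ℝ := fun ω => Real.exp (c1 * B ω) + Real.exp (-c1 * B ω) with hFBdef
  set K1 : ℝ := (|deriv φ 0| + C)^4 with hK1def
  have hK1 : 0 ≤ K1 := by positivity
  -- measurability
  have hAmeas : Measurable A := by
    apply Finset.measurable_sum
    intro i _
    exact ((measurable_pi_apply i).comp ((measurable_pi_apply d).comp hWmeas)).mul_const _
  have hBmeas : Measurable B := (measurable_pi_apply d).comp hbmeas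
  -- laws
  have hfunA : (fun ω => ∑ p : Fin D × Fin D,
      (if p.1 = d then ψ x p.2 else 0) * εW ω p.1 p.2) = A := by
    funext ω
    rw [Fintype.sum_prod_type]
    rw [Finset.sum_eq_single d]
    · simp only [if_pos rfl, hAdef]
      exact Finset.sum_congr rfl fun i _ => mul_comm _ _
    · intro b _ hb
      simp [hb]
    · simp
  have hA := hWgauss (fun p => if p.1 = d then ψ x p.2 else 0)
  rw [hfunA] at hA
  have hfunB : (fun ω => ∑ d', (if d' = d then (1:ℝ) else 0) * εb ω d') = B := by
    funext ω
    rw [Finset.sum_eq_single d]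
    · simp [hBdef]
    · intro b _ hb
      simp [hb]
    · simp
  have hB := hbgauss (fun d' => if d' = d then (1:ℝ) else 0)
  rw [hfunB] at hB
  -- integrability of exponentials
  have hintA : ∀ c : ℝ, Integrable (fun ω => Real.exp (c * A ω)) ℙ := by
    intro c
    have h : Integrable (fun y => Real.exp (c * y)) (Measure.map A ℙ) := by
      rw [hA]; exact gauss_exp_int c _
    exact (integrable_map_measure
      (Real.continuous_exp.comp (continuous_const.mul continuous_id)).aestronglyMeasurable
      hAmeas.aemeasurable).mp h
  have hintB : ∀ c : ℝ, Integrable (fun ω => Real.exp (c * B ω)) ℙ := by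
    intro c
    have h : Integrable (fun y => Real.exp (c * y)) (Measure.map B ℙ) := by
      rw [hB]; exact gauss_exp_int c _
    exact (integrable_map_measure
      (Real.continuous_exp.comp (continuous_const.mul continuous_id)).aestronglyMeasurable
      hBmeas.aemeasurable).mp h
  have hFWint : Integrable FW ℙ := (hintA c1).add (hintA (-c1))
  have hFBint : Integrable FB ℙ := (hintB c1).add (hintB (-c1))
  -- independence
  have hFWFB : IndepFun FW FB ℙ := by
    have h := hindep.comp
      (φ := fun w : Fin D → Fin D → ℝ =>
        Real.exp (c1 * ∑ i, w d i * ψ x i) + Real.exp (-c1 * ∑ i, w d i * ψ x i))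
      (ψ := fun w : Fin D → ℝ => Real.exp (c1 * w d) + Real.exp (-c1 * w d))
      (by
        have hsum : Measurable (fun w : Fin D → Fin D → ℝ => ∑ i, w d i * ψ x i) := by
          apply Finset.measurable_sum
          intro i _
          exact ((measurable_pi_apply i).comp (measurable_pi_apply d)).mul_const _
        exact (Real.measurable_exp.comp (hsum.const_mul c1)).add
          (Real.measurable_exp.comp (hsum.const_mul (-c1))))
      (by
        have hsum : Measurable (fun w : Fin D → ℝ => w d) := measurable_pi_apply d
        exact (Real.measurable_exp.comp (hsum.const_mul c1)).add
          (Real.measurable_exp.comp (hsum.const_mul (-c1))))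
    exact h
  have hprod : Integrable (fun ω => FW ω * FB ω) ℙ := hFWFB.integrable_mul hFWint hFBint
  have hprod_nn : ∀ ω, 0 ≤ FW ω * FB ω := fun ω => by positivity
  -- second-derivative growth
  have hg2 : ∀ y, |iteratedDeriv 2 φ y| ≤ C * Real.exp (k * |y|) := fun y =>
    (le_add_of_nonneg_right (abs_nonneg _)).trans (hgrowth y)
  set Cst : ℝ := K1 * 256 * Real.exp (c1 * |m0|) with hCstdef
  have hCst : 0 ≤ Cst := by positivity
  -- pointwise bound
  have key : ∀ Δt : ℝ, Δt ∈ Set.Ioo (0:ℝ) 1 → ∀ ω,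
      (Δx Δt ω d)^4 ≤ Δt^2 * (Cst * (FW ω * FB ω)) := by
    intro Δt hΔt ω
    set s := Real.sqrt Δt with hsdef
    have hs0 : 0 < s := Real.sqrt_pos.mpr hΔt.1
    have hssq : s^2 = Δt := Real.sq_sqrt hΔt.1.le
    have hs1 : s ≤ 1 := by
      rw [show (1:ℝ) = Real.sqrt 1 by simp [Real.sqrt_one]]
      exact Real.sqrt_le_sqrt hΔt.2.le
    have harg : ∑ i, (μW d i * Δt + εW ω d i * s) * ψ x i + (μb d * Δt + εb ω d * s)
        = Δt * m0 + s * (A ω + B ω) := by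
      have h1 : ∑ i, (μW d i * Δt + εW ω d i * s) * ψ x i
          = Δt * (∑ i, μW d i * ψ x i) + s * A ω := by
        rw [hAdef, Finset.mul_sum, Finset.mul_sum, ← Finset.sum_add_distrib]
        exact Finset.sum_congr rfl fun i _ => by ring
      rw [h1, hm0def]
      ring
    rw [hΔx Δt ω d, harg]
    set z := Δt * m0 + s * (A ω + B ω) with hzdef
    set u := |m0| + (|A ω| + |B ω|) with hudef
    have hu0 : 0 ≤ u := by positivity
    have hts : Δt ≤ s := by
      calc Δt = s * s := by rw [← hssq]; ring
        _ ≤ s * 1 := mul_le_mul_of_nonneg_left hs1 hs0.le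
        _ = s := mul_one s
    have hz : |z| ≤ s * u := by
      calc |z| ≤ |Δt * m0| + |s * (A ω + B ω)| := abs_add_le _ _
        _ = Δt * |m0| + s * |A ω + B ω| := by
            rw [abs_mul, abs_mul, abs_of_nonneg hΔt.1.le, abs_of_nonneg hs0.le]
        _ ≤ s * |m0| + s * (|A ω| + |B ω|) :=
            add_le_add (mul_le_mul_of_nonneg_right hts (abs_nonneg m0))
              (mul_le_mul_of_nonneg_left (abs_add_le _ _) hs0.le)
        _ = s * u := by rw [hudef]; ring
    have hzu : |z| ≤ u := hz.trans (mul_le_of_le_one_left hu0 hs1)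
    have hb := phi4_bound φ hφ hφ0 k C hC hk.le hg2 z
    have hsu : 0 ≤ s * u := by positivity
    calc (φ z)^4 ≤ K1 * z^4 * Real.exp ((4*k+4) * |z|) := hb
      _ ≤ K1 * (s*u)^4 * Real.exp ((4*k+4) * u) := by
          have h1 : z^4 ≤ (s*u)^4 := by
            calc z^4 = |z|^4 := by rw [← abs_pow, abs_of_nonneg (by positivity : (0:ℝ) ≤ z^4)]
              _ ≤ (s*u)^4 := pow_le_pow_left₀ (abs_nonneg _) hz 4
          have h2 : Real.exp ((4*k+4)*|z|) ≤ Real.exp ((4*k+4)*u) :=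
            Real.exp_le_exp.mpr (mul_le_mul_of_nonneg_left hzu (by positivity))
          exact mul_le_mul (mul_le_mul_of_nonneg_left h1 hK1) h2
            (Real.exp_pos _).le (by positivity)
      _ = Δt^2 * (K1 * u^4 * Real.exp ((4*k+4)*u)) := by
          have h4 : s^4 = Δt^2 := by
            rw [show s^4 = (s^2)^2 by ring, hssq]
          rw [mul_pow, h4]
          ring
      _ ≤ Δt^2 * (K1 * (256 * Real.exp u) * Real.exp ((4*k+4)*u)) := by
          have hu4 : u^4 ≤ 256 * Real.exp u := by
            have h1 : u/4 ≤ Real.exp (u/4) := by linarith [Real.add_one_le_exp (u/4)]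
            have h2 : (u/4)^4 ≤ (Real.exp (u/4))^4 :=
              pow_le_pow_left₀ (by positivity) h1 4
            have h3 : (Real.exp (u/4))^4 = Real.exp u := by
              rw [← Real.exp_nat_mul]
              congr 1
              push_cast
              ring
            rw [h3] at h2
            have h4 : (u/4)^4 = u^4/256 := by ring
            rw [h4, div_le_iff₀ (by norm_num : (0:ℝ) < 256)] at h2
            linarith [h2]
          exact mul_le_mul_of_nonneg_left
            (mul_le_mul_of_nonneg_right (mul_le_mul_of_nonneg_left hu4 hK1)
              (Real.exp_pos _).le) (sq_nonneg Δt)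
      _ = Δt^2 * (K1 * 256 * Real.exp (c1 * u)) := by
          have he : Real.exp u * Real.exp ((4*k+4)*u) = Real.exp (c1 * u) := by
            rw [← Real.exp_add]
            congr 1
            rw [hc1def]; ring
          rw [← he]; ring
      _ ≤ Δt^2 * (Cst * (FW ω * FB ω)) := by
          have hexp_split : Real.exp (c1 * u)
              = Real.exp (c1*|m0|) * (Real.exp (c1*|A ω|) * Real.exp (c1*|B ω|)) := by
            rw [← Real.exp_add, ← Real.exp_add, hudef]
            ring_nf
          have hFA : Real.exp (c1 * |A ω|) ≤ FW ω := by
            rcases le_total 0 (A ω) with h | h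
            · rw [abs_of_nonneg h, hFWdef]
              exact le_add_of_nonneg_right (Real.exp_pos _).le
            · rw [abs_of_nonpos h, hFWdef, show c1 * -A ω = -c1 * A ω by ring]
              exact le_add_of_nonneg_left (Real.exp_pos _).le
          have hFB : Real.exp (c1 * |B ω|) ≤ FB ω := by
            rcases le_total 0 (B ω) with h | h
            · rw [abs_of_nonneg h, hFBdef]
              exact le_add_of_nonneg_right (Real.exp_pos _).le
            · rw [abs_of_nonpos h, hFBdef, show c1 * -B ω = -c1 * B ω by ring]
              exact le_add_of_nonneg_left (Real.exp_pos _).le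
          have hmul : Real.exp (c1*|A ω|) * Real.exp (c1*|B ω|) ≤ FW ω * FB ω :=
            mul_le_mul hFA hFB (Real.exp_pos _).le (by positivity)
          have h9 : K1 * 256 * Real.exp (c1 * u) ≤ Cst * (FW ω * FB ω) := by
            rw [hexp_split, hCstdef]
            calc K1 * 256 * (Real.exp (c1*|m0|) * (Real.exp (c1*|A ω|) * Real.exp (c1*|B ω|)))
                = (K1 * 256 * Real.exp (c1*|m0|)) * (Real.exp (c1*|A ω|) * Real.exp (c1*|B ω|)) := by ring
              _ ≤ (K1 * 256 * Real.exp (c1*|m0|)) * (FW ω * FB ω) :=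
                  mul_le_mul_of_nonneg_left hmul (by positivity)
          exact mul_le_mul_of_nonneg_left h9 (sq_nonneg Δt)
  -- integral bound
  set Kf : ℝ := Cst * ∫ ω, FW ω * FB ω with hKfdef
  have hKf0 : 0 ≤ Kf := mul_nonneg hCst (integral_nonneg hprod_nn)
  have hint_le : ∀ Δt : ℝ, Δt ∈ Set.Ioo (0:ℝ) 1 →
      (∫ ω, (Δx Δt ω d)^4) ≤ Δt^2 * Kf := by
    intro Δt hΔt
    have h := integral_mono_of_nonneg
      (ae_of_all _ fun ω => by positivity : 0 ≤ᵐ[ℙ] fun ω => (Δx Δt ω d)^4)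
      (((hprod.const_mul Cst).const_mul (Δt^2)))
      (ae_of_all _ (key Δt hΔt))
    calc (∫ ω, (Δx Δt ω d)^4) ≤ ∫ ω, Δt^2 * (Cst * (FW ω * FB ω)) := h
      _ = Δt^2 * Kf := by
          rw [integral_const_mul, integral_const_mul]
  -- squeeze
  apply squeeze_zero' (g := fun Δt => Δt * Kf)
  · filter_upwards [self_mem_nhdsWithin] with t ht
    exact div_nonneg (integral_nonneg fun ω => by positivity) (le_of_lt ht)
  · filter_upwards [Ioo_mem_nhdsGT_of_mem
      (show (0:ℝ) ∈ Set.Ico (0:ℝ) 1 from ⟨le_refl _, zero_lt_one⟩)] with t ht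
    rw [div_le_iff₀ ht.1]
    calc (∫ ω, (Δx t ω d)^4) ≤ t^2 * Kf := hint_le t ht
      _ = t * Kf * t := by ring
  · have h := ((continuous_mul_right Kf).tendsto 0).mono_left
      (nhdsWithin_le_nhds (s := Set.Ioi (0:ℝ)))
    simpa using h
end

section
/- If G ~ N(0, v) then E[φ(G√Δt)²] = φ'(0)² v Δt + o(Δt) as Δt ↓ 0, for φ ∈ C³ with φ(0) = 0 and second/third derivatives of at most exponential growth. -/
open MeasureTheory ProbabilityTheory Filter Real Set
open scoped NNReal ENNReal

lemma stmt14_aux_vol {b : ℝ} (hb : 0 < b) (n : ℕ) {c : ℝ} (hc : 0 ≤ c) :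
    Integrable (fun x : ℝ => |x| ^ n * Real.exp (c * |x|) * Real.exp (-b * x ^ 2)) := by
  have h2n : Integrable (fun x : ℝ => x ^ (2 * n) * Real.exp (-(b / 2) * x ^ 2)) := by
    have := integrable_rpow_mul_exp_neg_mul_sq (half_pos hb) (s := ((2 * n : ℕ) : ℝ))
      (by exact neg_one_lt_zero.trans_le (Nat.cast_nonneg _))
    have heq : ∀ x : ℝ, x ^ ((2 * n : ℕ) : ℝ) = x ^ (2 * n) := fun x => Real.rpow_natCast x _
    simpa only [heq, neg_mul] using this
  have hmaj : Integrable (fun x : ℝ => Real.exp (c ^ 2 / (2 * b)) *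
      (Real.exp (-(b / 2) * x ^ 2) + x ^ (2 * n) * Real.exp (-(b / 2) * x ^ 2))) :=
    ((integrable_exp_neg_mul_sq (half_pos hb)).add h2n).const_mul _
  refine hmaj.mono' ?_ (ae_of_all _ fun x => ?_)
  · exact ((continuous_abs.pow n).mul
      ((continuous_const.mul continuous_abs).rexp)).mul
      (((continuous_const.mul (continuous_pow 2)).rexp)) |>.aestronglyMeasurable
  · have h1 : |x| ^ n ≤ 1 + x ^ (2 * n) := by
      rcases le_total (|x|) 1 with h | h
      · have : |x| ^ n ≤ 1 := pow_le_one₀ (abs_nonneg x) h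
        have h3 : (0:ℝ) ≤ x ^ (2 * n) := by
          have : x ^ (2 * n) = |x| ^ (2 * n) := by
            rw [← abs_pow, abs_of_nonneg]
            rw [pow_mul]; positivity
          rw [this]; positivity
        nlinarith
      · have h2 : |x| ^ n ≤ |x| ^ (2 * n) := pow_le_pow_right₀ h (by omega)
        have h3 : |x| ^ (2 * n) = x ^ (2 * n) := by
          rw [← abs_pow, abs_of_nonneg (even_two_mul n |>.pow_nonneg x)]
        nlinarith
    have h2 : Real.exp (c * |x|) * Real.exp (-b * x ^ 2)
        ≤ Real.exp (c ^ 2 / (2 * b)) * Real.exp (-(b / 2) * x ^ 2) := by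
      rw [← Real.exp_add, ← Real.exp_add]
      apply Real.exp_le_exp.2
      have := sq_nonneg (c - b * |x|)
      have hx2 : |x| ^ 2 = x ^ 2 := sq_abs x
      have hb' := hb
      have habs : 0 ≤ |x| := abs_nonneg x
      rw [← sub_nonneg]
      have key : c ^ 2 / (2 * b) + -(b / 2) * x ^ 2 - (c * |x| + -b * x ^ 2)
          = (c - b * |x|) ^ 2 / (2 * b) := by
        rw [← hx2]
        field_simp
        ring_nf
      rw [key]; positivity
    have hnn : (0:ℝ) ≤ Real.exp (c * |x|) * Real.exp (-b * x ^ 2) := by positivity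
    have hnorm : ‖|x| ^ n * Real.exp (c * |x|) * Real.exp (-b * x ^ 2)‖
        = |x| ^ n * (Real.exp (c * |x|) * Real.exp (-b * x ^ 2)) := by
      rw [Real.norm_eq_abs, abs_of_nonneg, mul_assoc]
      positivity
    rw [hnorm]
    calc |x| ^ n * (Real.exp (c * |x|) * Real.exp (-b * x ^ 2))
        ≤ (1 + x ^ (2 * n)) * (Real.exp (c ^ 2 / (2 * b)) * Real.exp (-(b / 2) * x ^ 2)) :=
          mul_le_mul h1 h2 (by positivity) (le_trans (pow_nonneg (abs_nonneg x) n) h1)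
      _ = Real.exp (c ^ 2 / (2 * b)) *
          (Real.exp (-(b / 2) * x ^ 2) + x ^ (2 * n) * Real.exp (-(b / 2) * x ^ 2)) := by ring

lemma stmt14_aux_gauss {v : NNReal} (hv : v ≠ 0) (n : ℕ) {c : ℝ} (hc : 0 ≤ c) :
    Integrable (fun x : ℝ => |x| ^ n * Real.exp (c * |x|)) (gaussianReal 0 v) := by
  have hv' : (0:ℝ) < (v:ℝ) := NNReal.coe_pos.mpr (pos_iff_ne_zero.mpr hv)
  rw [gaussianReal_of_var_ne_zero 0 hv,
    integrable_withDensity_iff (measurable_gaussianPDF 0 v)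
      (ae_of_all _ fun x => ENNReal.ofReal_lt_top)]
  have hb : (0:ℝ) < (2 * (v:ℝ))⁻¹ := by positivity
  have heq : ∀ x : ℝ, |x| ^ n * Real.exp (c * |x|) * (gaussianPDF 0 v x).toReal
      = (√(2 * π * v))⁻¹ * (|x| ^ n * Real.exp (c * |x|) * Real.exp (-(2 * (v:ℝ))⁻¹ * x ^ 2)) := by
    intro x
    rw [gaussianPDF, ENNReal.toReal_ofReal (gaussianPDFReal_nonneg 0 v x), gaussianPDFReal]
    rw [sub_zero]
    rw [show -x ^ 2 / (2 * (v:ℝ)) = -(2 * (v:ℝ))⁻¹ * x ^ 2 by field_simp]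
    ring
  simp only [heq]
  exact (stmt14_aux_vol hb n hc).const_mul _

lemma stmt14_aux_moment {v : NNReal} (hv : v ≠ 0) :
    ∫ x, x ^ 2 ∂(gaussianReal 0 v) = (v : ℝ) := by
  have hv' : (0:ℝ) < (v:ℝ) := NNReal.coe_pos.mpr (pos_iff_ne_zero.mpr hv)
  set b : ℝ := (2 * (v:ℝ))⁻¹ with hbdef
  have hb : (0:ℝ) < b := by positivity
  rw [gaussianReal_of_var_ne_zero 0 hv]
  have hpdf : gaussianPDF 0 v = fun x => (((gaussianPDFReal 0 v x).toNNReal : ℝ≥0) : ℝ≥0∞) := rfl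
  rw [hpdf, integral_withDensity_eq_integral_smul (measurable_gaussianPDFReal 0 v).real_toNNReal]
  have heq : ∀ x : ℝ, ((gaussianPDFReal 0 v x).toNNReal : ℝ≥0) • x ^ 2
      = (√(2 * π * v))⁻¹ * (x ^ 2 * Real.exp (-b * x ^ 2)) := by
    intro x
    rw [NNReal.smul_def, smul_eq_mul, Real.coe_toNNReal _ (gaussianPDFReal_nonneg 0 v x),
      gaussianPDFReal, sub_zero,
      show -x ^ 2 / (2 * (v:ℝ)) = -b * x ^ 2 by rw [hbdef]; field_simp]
    ring
  simp only [heq]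
  rw [integral_const_mul]
  have habs : ∫ x : ℝ, x ^ 2 * Real.exp (-b * x ^ 2)
      = ∫ x : ℝ, (fun t : ℝ => t ^ 2 * Real.exp (-b * t ^ 2)) |x| := by
    congr 1; funext x; simp [sq_abs]
  have hrpow : ∀ x : ℝ, 0 < x → x ^ (2:ℝ) = x ^ (2:ℕ) := by
    intro x _
    rw [show (2:ℝ) = ((2:ℕ):ℝ) by norm_num, Real.rpow_natCast]
  have hioi : ∫ x in Ioi (0:ℝ), x ^ 2 * Real.exp (-b * x ^ 2)
      = b ^ (-(2 + 1) / 2 : ℝ) * (1 / 2) * Real.Gamma ((2 + 1) / 2) := by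
    rw [← integral_rpow_mul_exp_neg_mul_rpow two_pos (by norm_num) hb]
    refine setIntegral_congr_fun measurableSet_Ioi fun x hx => ?_
    rw [hrpow x hx]
  rw [habs, integral_comp_abs (f := fun t : ℝ => t ^ 2 * Real.exp (-b * t ^ 2)), hioi]
  have hgamma : Real.Gamma ((2 + 1) / 2) = √π / 2 := by
    rw [show ((2:ℝ) + 1) / 2 = 1 / 2 + 1 by norm_num,
      Real.Gamma_add_one (by norm_num), Real.Gamma_one_half_eq]
    ring
  rw [hgamma]
  have hbrw : b ^ (-(2 + 1) / 2 : ℝ) = (2 * (v:ℝ)) * √(2 * (v:ℝ)) := by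
    rw [hbdef, Real.inv_rpow (by positivity), ← Real.rpow_neg (by positivity), neg_div, neg_neg,
      show ((2:ℝ)+1)/2 = 1 + 1/2 by norm_num, Real.rpow_add (by positivity), Real.rpow_one,
      ← Real.sqrt_eq_rpow]
  rw [hbrw]
  have hs2v : (0:ℝ) < √(2*(v:ℝ)) := Real.sqrt_pos.mpr (by positivity)
  have hspi : (0:ℝ) < √π := Real.sqrt_pos.mpr pi_pos
  have hmul : √(2*(v:ℝ)) * √(2*(v:ℝ)) = 2*(v:ℝ) := Real.mul_self_sqrt (by positivity)
  rw [show (2*π*(v:ℝ)) = (2*(v:ℝ))*π by ring, Real.sqrt_mul (by positivity)]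
  field_simp

lemma stmt14_taylor {φ : ℝ → ℝ} (hφ : ContDiff ℝ 3 φ) (hφ0 : φ 0 = 0)
    {k C : ℝ} (hk : 0 ≤ k) (hC : 0 ≤ C)
    (hgrowth : ∀ y : ℝ, |deriv (deriv φ) y| ≤ C * Real.exp (k * |y|)) :
    ∀ y : ℝ, |φ y - deriv φ 0 * y| ≤ C * Real.exp (k * |y|) * y ^ 2 := by
  have hφ' : ContDiff ℝ 2 (deriv φ) := by
    have h3 : ContDiff ℝ ((2:ℕ) + 1) φ := by exact_mod_cast hφ
    exact (contDiff_succ_iff_deriv.mp h3).2.2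
  have hd1 : Differentiable ℝ φ := hφ.differentiable (by norm_num)
  have hd2 : Differentiable ℝ (deriv φ) := hφ'.differentiable (by norm_num)
  intro y
  have habs : ∀ x ∈ uIcc (0:ℝ) y, |x| ≤ |y| := by
    intro x hx
    rcases le_total (0:ℝ) y with h | h
    · rw [uIcc_of_le h] at hx
      rw [abs_of_nonneg hx.1, abs_of_nonneg h]; exact hx.2
    · rw [uIcc_of_ge h] at hx
      rw [abs_of_nonpos hx.2, abs_of_nonpos h]; exact neg_le_neg hx.1
  have hstep1 : ∀ x ∈ uIcc (0:ℝ) y, |deriv φ x - deriv φ 0| ≤ (C * Real.exp (k * |y|)) * |x| := by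
    intro x hx
    have := Convex.norm_image_sub_le_of_norm_hasDerivWithin_le
      (f := deriv φ) (f' := fun t => deriv (deriv φ) t) (s := uIcc (0:ℝ) y)
      (fun t _ => ((hd2 t).hasDerivAt).hasDerivWithinAt)
      (fun t ht => le_trans (hgrowth t)
        (mul_le_mul_of_nonneg_left
          (Real.exp_le_exp.2 (mul_le_mul_of_nonneg_left (habs t ht) hk)) hC))
      (convex_uIcc _ _) (left_mem_uIcc) hx
    simpa [Real.norm_eq_abs] using this
  have hstep2 := Convex.norm_image_sub_le_of_norm_hasDerivWithin_le
      (f := fun t => φ t - deriv φ 0 * t) (f' := fun t => deriv φ t - deriv φ 0)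
      (s := uIcc (0:ℝ) y)
      (fun t _ => (((hd1 t).hasDerivAt).sub
        (by simpa using (hasDerivAt_id t).const_mul (deriv φ 0))).hasDerivWithinAt)
      (fun t ht => by
        rw [Real.norm_eq_abs]
        exact le_trans (hstep1 t ht) (by
          have h0 : 0 ≤ C * Real.exp (k * |y|) := by positivity
          exact mul_le_mul_of_nonneg_left (habs t ht) h0))
      (convex_uIcc _ _) (left_mem_uIcc) (right_mem_uIcc)
  simp only [hφ0, mul_zero, sub_zero, sub_self, Real.norm_eq_abs] at hstep2
  calc |φ y - deriv φ 0 * y| ≤ C * Real.exp (k * |y|) * |y| * |y| := by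
        simpa [sub_zero] using hstep2
    _ = C * Real.exp (k * |y|) * y ^ 2 := by rw [mul_assoc, ← abs_mul, ← sq, abs_of_nonneg (sq_nonneg y)]

/-- If `G ~ N(0, v)` then `E[φ(G√Δt)²] = φ'(0)² v Δt + o(Δt)` as
`Δt ↓ 0`, for `φ ∈ C³` with `φ(0) = 0` and second/third derivatives of at most
exponential growth. -/
theorem stmt_14 (v : NNReal)
    (φ : ℝ → ℝ) (hφ : ContDiff ℝ 3 φ) (hφ0 : φ 0 = 0)
    (k C : ℝ) (hk : 0 < k) (hC : 0 ≤ C)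
    (hgrowth : ∀ y : ℝ,
      |iteratedDeriv 2 φ y| + |iteratedDeriv 3 φ y| ≤ C * Real.exp (k * |y|)) :
    Tendsto (fun Δt : ℝ =>
        ((∫ g, (φ (g * Real.sqrt Δt)) ^ 2 ∂(gaussianReal 0 v))
          - (deriv φ 0) ^ 2 * (v : ℝ) * Δt) / Δt)
      (nhdsWithin 0 (Set.Ioi 0)) (nhds 0) := by
  by_cases hv : v = 0
  · subst hv
    have : ∀ Δt : ℝ, ((∫ g, (φ (g * Real.sqrt Δt)) ^ 2 ∂(gaussianReal 0 0))
          - (deriv φ 0) ^ 2 * ((0:NNReal) : ℝ) * Δt) / Δt = 0 := by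
      intro Δt
      rw [gaussianReal_zero_var, integral_dirac]
      simp [hφ0]
    simp only [this]
    exact tendsto_const_nhds
  -- main case
  set a : ℝ := deriv φ 0 with ha
  have hgrowth2 : ∀ y : ℝ, |deriv (deriv φ) y| ≤ C * Real.exp (k * |y|) := by
    intro y
    have h := hgrowth y
    have : |deriv (deriv φ) y| = |iteratedDeriv 2 φ y| := by
      rw [iteratedDeriv_succ, iteratedDeriv_succ, iteratedDeriv_zero]
    rw [this]
    exact le_trans (le_add_of_nonneg_right (abs_nonneg _)) h
  have htay := stmt14_taylor hφ hφ0 hk.le hC hgrowth2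
  set γ := gaussianReal 0 v with hγ
  set M : ℝ → ℝ := fun g => C * Real.exp (k * |g|) * g ^ 2 *
      (C * Real.exp (k * |g|) * g ^ 2 + 2 * |a| * |g|) with hM
  have hM_nonneg : ∀ g, 0 ≤ M g := fun g => by positivity
  have hM_int : Integrable M γ := by
    have h1 : Integrable (fun g : ℝ => C ^ 2 * (|g| ^ 4 * Real.exp (2 * k * |g|))) γ :=
      (stmt14_aux_gauss hv 4 (by positivity)).const_mul _
    have h2 : Integrable (fun g : ℝ => (2 * C * |a|) * (|g| ^ 3 * Real.exp (k * |g|))) γ :=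
      (stmt14_aux_gauss hv 3 hk.le).const_mul _
    refine (h1.add h2).congr (ae_of_all _ fun g => ?_)
    simp only [Pi.add_apply]
    show C ^ 2 * (|g| ^ 4 * Real.exp (2 * k * |g|)) + 2 * C * |a| * (|g| ^ 3 * Real.exp (k * |g|))
        = C * Real.exp (k * |g|) * g ^ 2 * (C * Real.exp (k * |g|) * g ^ 2 + 2 * |a| * |g|)
    have hg2 : g ^ 2 = |g| ^ 2 := (sq_abs g).symm
    rw [show (2:ℝ) * k * |g| = k * |g| + k * |g| by ring, Real.exp_add, hg2]
    ring
  set I : ℝ := ∫ g, M g ∂γ with hI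
  have hI_nonneg : 0 ≤ I := integral_nonneg hM_nonneg
  have hsq_int : Integrable (fun g : ℝ => g ^ 2) γ := by
    have := stmt14_aux_gauss hv 2 (c := 0) le_rfl
    refine this.congr (ae_of_all _ fun g => ?_)
    simp [sq_abs]
  -- key pointwise bound for Δt ∈ Ioo 0 1
  have key : ∀ Δt ∈ Ioo (0:ℝ) 1, ∀ g : ℝ,
      |φ (g * Real.sqrt Δt) ^ 2 - a ^ 2 * Δt * g ^ 2| ≤ (Δt * Real.sqrt Δt) * M g := by
    intro Δt hΔt g
    set t := Real.sqrt Δt with htdef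
    have ht0 : 0 ≤ t := Real.sqrt_nonneg _
    have ht1 : t ≤ 1 := by
      rw [htdef, show (1:ℝ) = Real.sqrt 1 by simp]
      exact Real.sqrt_le_sqrt hΔt.2.le
    have ht2 : t ^ 2 = Δt := Real.sq_sqrt hΔt.1.le
    set y := g * t with hy
    have hy2 : y ^ 2 = g ^ 2 * Δt := by rw [hy, mul_pow, ht2]
    have hay : |y| = |g| * t := by rw [hy, abs_mul, abs_of_nonneg ht0]
    have hexp_le : Real.exp (k * |y|) ≤ Real.exp (k * |g|) := by
      apply Real.exp_le_exp.2
      rw [hay, ← mul_assoc]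
      exact mul_le_of_le_one_right (by positivity) ht1
    have h1 : |φ y - a * y| ≤ C * Real.exp (k * |g|) * g ^ 2 * t ^ 2 := by
      refine le_trans (htay y) ?_
      rw [hy2, ← ht2]
      calc C * Real.exp (k * |y|) * (g ^ 2 * t ^ 2)
          ≤ C * Real.exp (k * |g|) * (g ^ 2 * t ^ 2) := by
            have hP : (0:ℝ) ≤ g ^ 2 * t ^ 2 := by positivity
            have := mul_le_mul_of_nonneg_left hexp_le hC
            exact mul_le_mul_of_nonneg_right this hP
        _ = C * Real.exp (k * |g|) * g ^ 2 * t ^ 2 := by ring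
    have h2 : |φ y + a * y| ≤ C * Real.exp (k * |g|) * g ^ 2 * t ^ 2 + 2 * |a| * |g| * t := by
      have : φ y + a * y = (φ y - a * y) + 2 * (a * y) := by ring
      rw [this]
      refine le_trans (abs_add_le _ _) ?_
      have h2' : |2 * (a * y)| = 2 * |a| * |g| * t := by
        rw [abs_mul, abs_mul, hay, abs_two]; ring
      rw [h2']
      exact add_le_add_left h1 _
    have hfac : φ y ^ 2 - a ^ 2 * Δt * g ^ 2 = (φ y - a * y) * (φ y + a * y) := by
      have : a ^ 2 * Δt * g ^ 2 = (a * y) ^ 2 := by rw [mul_pow, hy2]; ring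
      rw [this]; ring
    rw [hfac, abs_mul]
    set X := C * Real.exp (k * |g|) * g ^ 2 with hX
    have hX0 : 0 ≤ X := by positivity
    have hA0 : 0 ≤ 2 * |a| * |g| := by positivity
    calc |φ y - a * y| * |φ y + a * y|
        ≤ (X * t ^ 2) * (X * t ^ 2 + 2 * |a| * |g| * t) :=
          mul_le_mul h1 h2 (abs_nonneg _) (by positivity)
      _ ≤ (Δt * t) * M g := by
          simp only [hM]
          rw [← hX, ← ht2]
          have ht2' : t ^ 2 ≤ t := by nlinarith [mul_le_mul_of_nonneg_left ht1 ht0]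
          have ht3 : t ^ 2 * t ^ 2 ≤ t ^ 2 * t := mul_le_mul_of_nonneg_left ht2' (sq_nonneg t)
          nlinarith [mul_nonneg (mul_nonneg hX0 hX0) (sub_nonneg.2 ht3),
            mul_nonneg (mul_nonneg hX0 hA0) ht0, sq_nonneg t]
  -- eventual bound
  have hbound : ∀ Δt ∈ Ioo (0:ℝ) 1,
      ‖((∫ g, (φ (g * Real.sqrt Δt)) ^ 2 ∂γ) - a ^ 2 * (v : ℝ) * Δt) / Δt‖
        ≤ Real.sqrt Δt * I := by
    intro Δt hΔt
    have hΔ0 : (0:ℝ) < Δt := hΔt.1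
    have hcont : Continuous (fun g : ℝ => φ (g * Real.sqrt Δt) ^ 2 - a ^ 2 * Δt * g ^ 2) := by
      have h1 : Continuous (fun g : ℝ => φ (g * Real.sqrt Δt)) :=
        hφ.continuous.comp (continuous_id.mul continuous_const)
      exact (h1.pow 2).sub ((continuous_const.mul (continuous_pow 2)))
    have hD_int : Integrable (fun g : ℝ => φ (g * Real.sqrt Δt) ^ 2 - a ^ 2 * Δt * g ^ 2) γ := by
      refine (hM_int.const_mul (Δt * Real.sqrt Δt)).mono' hcont.aestronglyMeasurable
        (ae_of_all _ fun g => ?_)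
      rw [Real.norm_eq_abs]
      exact key Δt hΔt g
    have hφ_int : Integrable (fun g : ℝ => φ (g * Real.sqrt Δt) ^ 2) γ := by
      have := hD_int.add (hsq_int.const_mul (a ^ 2 * Δt))
      refine this.congr (ae_of_all _ fun g => ?_)
      simp
    have hsplit : (∫ g, (φ (g * Real.sqrt Δt)) ^ 2 ∂γ) - a ^ 2 * (v : ℝ) * Δt
        = ∫ g, (φ (g * Real.sqrt Δt) ^ 2 - a ^ 2 * Δt * g ^ 2) ∂γ := by
      rw [integral_sub hφ_int (hsq_int.const_mul (a ^ 2 * Δt)), integral_const_mul,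
        stmt14_aux_moment hv]
      ring
    rw [hsplit]
    have hnorm_int : ‖∫ g, (φ (g * Real.sqrt Δt) ^ 2 - a ^ 2 * Δt * g ^ 2) ∂γ‖
        ≤ (Δt * Real.sqrt Δt) * I := by
      rw [hI, ← integral_const_mul]
      refine norm_integral_le_of_norm_le (hM_int.const_mul _) (ae_of_all _ fun g => ?_)
      rw [Real.norm_eq_abs]
      exact key Δt hΔt g
    rw [norm_div, Real.norm_eq_abs Δt, abs_of_pos hΔ0]
    rw [div_le_iff₀ hΔ0]
    calc ‖∫ g, (φ (g * Real.sqrt Δt) ^ 2 - a ^ 2 * Δt * g ^ 2) ∂γ‖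
        ≤ (Δt * Real.sqrt Δt) * I := hnorm_int
      _ = Real.sqrt Δt * I * Δt := by ring
  -- squeeze
  have hIoo : Ioo (0:ℝ) 1 ∈ nhdsWithin (0:ℝ) (Set.Ioi 0) :=
    Ioo_mem_nhdsGT_of_mem (by norm_num : (0:ℝ) ∈ Ico (0:ℝ) 1)
  have hg_tendsto : Tendsto (fun Δt : ℝ => Real.sqrt Δt * I)
      (nhdsWithin 0 (Set.Ioi 0)) (nhds 0) := by
    have h1 : Tendsto (fun Δt : ℝ => Real.sqrt Δt) (nhds 0) (nhds 0) := by
      have := Real.continuous_sqrt.tendsto 0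
      simpa using this
    have h2 : Tendsto (fun Δt : ℝ => Real.sqrt Δt)
        (nhdsWithin (0:ℝ) (Set.Ioi 0)) (nhds 0) := h1.mono_left nhdsWithin_le_nhds
    simpa using h2.mul_const I
  refine squeeze_zero_norm' ?_ hg_tendsto
  filter_upwards [hIoo] with Δt hΔt
  exact hbound Δt hΔt
end
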